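/- Let G be a connected plane (multi)graph with dual G*. Then G is ℤ/3-flow-critical if and only if G* is 4-critical. Consequently, Euler's formula together with the bound |E(F)| ≥ (5/3)|V(F)| for ℤ/3-flow-critical F ≠ K₂, K₄ implies every n-vertex 4-critical planar graph other than K₄ has at most 2.5(n-2) edges. -/

import Mathlib

open Finset

/-- A multigraph with a fixed orientation of its edges: each edge has a
tail and a head. -/
structure MultiGraph where
  V : Type
  E : Type
  [fV : Fintype V]
  [fE : Fintype E]
  [dV : DecidableEq V]
  [dE : DecidableEq E]
  tail : E → V
  head : E → V

namespace MultiGraph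

attribute [instance] fV fE dV dE

variable (G : MultiGraph)

/-- The incidence sign `[v,e]`: `1` if `e` is oriented towards `v`, `-1` if
oriented away from `v`, `0` otherwise (so `0` on loops). -/
def sign (v : G.V) (e : G.E) : ℤ :=
  (if G.head e = v then 1 else 0) - (if G.tail e = v then 1 else 0)

/-- A flow with values in an abelian group: conservation at every vertex. -/
def IsFlow {A : Type*} [AddCommGroup A] (φ : G.E → A) : Prop :=
  ∀ v : G.V, ∑ e : G.E, G.sign v e • φ e = 0

/-- A nowhere-zero flow. -/
def IsNZFlow {A : Type*} [AddCommGroup A] (φ : G.E → A) : Prop :=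
  G.IsFlow φ ∧ ∀ e : G.E, φ e ≠ 0

/-- `G` admits a nowhere-zero `A`-flow. -/
def HasNZFlow (A : Type*) [AddCommGroup A] : Prop :=
  ∃ φ : G.E → A, G.IsNZFlow φ

/-- Two vertices are joined by an edge (in either direction). -/
def Adj (a b : G.V) : Prop :=
  ∃ e : G.E, (G.tail e = a ∧ G.head e = b) ∨ (G.tail e = b ∧ G.head e = a)

/-- `G` is connected. -/
def Connected : Prop :=
  Nonempty G.V ∧ ∀ a b : G.V, Relation.ReflTransGen G.Adj a b

/-- Contraction of a set of edges: the contracted edges are removed and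
their endpoints identified. -/
noncomputable def contract (S : Set G.E) : MultiGraph := by
  classical
  exact
  { V := Quot (fun a b : G.V => ∃ e ∈ S, G.tail e = a ∧ G.head e = b)
    E := {e : G.E // e ∉ S}
    fV := Fintype.ofSurjective (Quot.mk _) (Quot.mk_surjective)
    tail := fun e => Quot.mk _ (G.tail e.1)
    head := fun e => Quot.mk _ (G.head e.1) }

/-- `G` is `A`-flow-critical: `G` is connected, has no nowhere-zero `A`-flow,
but every single-edge contraction does. -/
noncomputable def FlowCritical (A : Type*) [AddCommGroup A] : Prop :=
  G.Connected ∧ ¬ G.HasNZFlow A ∧ ∀ e : G.E, (G.contract {e}).HasNZFlow A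

/-- The degree of a vertex (loops counted twice). -/
def degree (v : G.V) : ℕ :=
  (univ.filter fun e : G.E => G.tail e = v).card +
    (univ.filter fun e : G.E => G.head e = v).card

/-- Incidence of a vertex and an edge. -/
def Incident (v : G.V) (e : G.E) : Prop := G.tail e = v ∨ G.head e = v

/-- The vector `δ_v ∈ (ℤ/3)^{E(G)}`, `δ_v(e) = [v,e]`. -/
def deltaV (v : G.V) : G.E → ZMod 3 := fun e => (G.sign v e : ZMod 3)

/-- The vector `δ_{v,e₁,e₂}`: `[v,e₁]` on `e₁`, `-[v,e₂]` on `e₂`, `0` elsewhere. -/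
def deltaPair (v : G.V) (e₁ e₂ : G.E) : G.E → ZMod 3 := fun e =>
  if e = e₁ then (G.sign v e₁ : ZMod 3)
  else if e = e₂ then -(G.sign v e₂ : ZMod 3) else 0

/-- The dot product on `(ℤ/3)^{E(G)}`. -/
def dot (c φ : G.E → ZMod 3) : ZMod 3 := ∑ e : G.E, c e * φ e

/-- The subspace `Δ_v`: the span of `δ_v` if `deg v ≠ 3`, and the span of `δ_v`
together with the vectors `δ_{v,e₁,e₂}` for incident edges if `deg v = 3`. -/
def DeltaSub (v : G.V) : Submodule (ZMod 3) (G.E → ZMod 3) :=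
  if G.degree v = 3 then
    Submodule.span (ZMod 3) ({G.deltaV v} ∪
      {x | ∃ e₁ e₂ : G.E, e₁ ≠ e₂ ∧ G.Incident v e₁ ∧ G.Incident v e₂ ∧
        x = G.deltaPair v e₁ e₂})
  else Submodule.span (ZMod 3) {G.deltaV v}

/-- Isomorphism of multigraphs (edges may be reversed, since the orientation
is an arbitrary fixed choice). -/
def Iso (G H : MultiGraph) : Prop :=
  ∃ (f : G.V ≃ H.V) (g : G.E ≃ H.E), ∀ e : G.E,
    (H.tail (g e) = f (G.tail e) ∧ H.head (g e) = f (G.head e)) ∨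
    (H.tail (g e) = f (G.head e) ∧ H.head (g e) = f (G.tail e))

/-- The graph with two vertices joined by `m` parallel edges. -/
def banana (m : ℕ) : MultiGraph where
  V := Bool
  E := Fin m
  tail := fun _ => false
  head := fun _ => true

/-- The wheel `W_k`: a cycle on `k` vertices plus a hub (`none`) adjacent to all
of them.  `Sum.inl` are the cycle edges, `Sum.inr` the spokes. -/
def wheel (k : ℕ) : MultiGraph where
  V := Option (Fin k)
  E := Fin k ⊕ Fin k
  tail := fun e => Sum.elim (fun i => some i) (fun i => some i) e
  head := fun e => Sum.elim (fun i => some (finRotate k i)) (fun _ => none) e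

/-- `K₂`. -/
def K2 : MultiGraph := banana 1

/-- `K₄` (the wheel on `3 + 1` vertices). -/
def K4 : MultiGraph := wheel 3

/-- `G` is a wheel. -/
def IsWheel : Prop := ∃ k : ℕ, 3 ≤ k ∧ Iso G (wheel k)

end MultiGraph
namespace MultiGraph

/-- Deletion of a set of edges. -/
noncomputable def deleteEdges (G : MultiGraph) (S : Set G.E) : MultiGraph := by
  classical
  exact
  { V := G.V
    E := {e : G.E // e ∉ S}
    tail := fun e => G.tail e.1
    head := fun e => G.head e.1 }

/-- Proper 3-colorability. -/
def Colorable3 (G : MultiGraph) : Prop :=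
  ∃ f : G.V → Fin 3, ∀ e : G.E, f (G.tail e) ≠ f (G.head e)

/-- The subgraph of `G` with vertex set `SV` and edge set `SE`. -/
noncomputable def subgraph (G : MultiGraph) (SV : Set G.V) (SE : Set G.E)
    (hSE : ∀ e ∈ SE, G.tail e ∈ SV ∧ G.head e ∈ SV) : MultiGraph := by
  classical
  exact
  { V := SV
    E := SE
    tail := fun e => ⟨G.tail e.1, (hSE e.1 e.2).1⟩
    head := fun e => ⟨G.head e.1, (hSE e.1 e.2).2⟩ }

/-- `G` is 4-critical: not 3-colorable, but every proper subgraph is. -/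
def FourCritical (G : MultiGraph) : Prop :=
  ¬ G.Colorable3 ∧
  ∀ (SV : Set G.V) (SE : Set G.E)
    (hSE : ∀ e ∈ SE, G.tail e ∈ SV ∧ G.head e ∈ SV),
    (SV ≠ Set.univ ∨ SE ≠ Set.univ) → (G.subgraph SV SE hSE).Colorable3

/-- A connected plane multigraph `G` together with its dual `D`: they share
the edge set (via `eEquiv`), both are connected, Euler's formula holds, and
Tutte's duality holds for all edge subsets (deleting edges in the dual
corresponds to contracting them in `G`). -/
structure PlaneDualPair where
  G : MultiGraph
  D : MultiGraph
  eEquiv : G.E ≃ D.E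
  conn : G.Connected
  connD : D.Connected
  euler : Fintype.card G.V + Fintype.card D.V = Fintype.card G.E + 2
  tutte : ∀ S : Set G.E,
    (D.deleteEdges (eEquiv '' S)).Colorable3 ↔ (G.contract S).HasNZFlow (ZMod 3)

end MultiGraph
namespace MultiGraph

variable (G : MultiGraph)

/-- The contraction relation. -/
def crel (S : Set G.E) : G.V → G.V → Prop :=
  fun a b => ∃ e ∈ S, G.tail e = a ∧ G.head e = b

theorem contract_V (S : Set G.E) : (G.contract S).V = Quot (G.crel S) := rfl
theorem contract_E (S : Set G.E) : (G.contract S).E = {e : G.E // e ∉ S} := rfl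

theorem contract_tail (S : Set G.E) (e : (G.contract S).E) :
    (G.contract S).tail e = Quot.mk (G.crel S) (G.tail e.1) := rfl
theorem contract_head (S : Set G.E) (e : (G.contract S).E) :
    (G.contract S).head e = Quot.mk (G.crel S) (G.head e.1) := rfl

variable {G}

theorem sign_eq_zero {v : G.V} {e : G.E} (h1 : G.tail e ≠ v) (h2 : G.head e ≠ v) :
    G.sign v e = 0 := by
  simp [sign, h1, h2]

theorem sign_eq_zero_of_loop {v : G.V} {e : G.E} (h : G.tail e = G.head e) :
    G.sign v e = 0 := by
  unfold sign
  rw [h]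
  ring

theorem sign_tail {v : G.V} {e : G.E} (h1 : G.tail e = v) (h2 : G.head e ≠ v) :
    G.sign v e = -1 := by
  simp [sign, h1, h2]

theorem sign_head {v : G.V} {e : G.E} (h1 : G.tail e ≠ v) (h2 : G.head e = v) :
    G.sign v e = 1 := by
  simp [sign, h1, h2]

theorem sign_cast_ne_zero {v : G.V} {e : G.E} (hnl : G.tail e ≠ G.head e)
    (hinc : G.tail e = v ∨ G.head e = v) : ((G.sign v e : ZMod 3)) ≠ 0 := by
  rcases hinc with h | h
  · rw [sign_tail h (fun hh => hnl (h.trans hh.symm))]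
    decide
  · rw [sign_head (fun hh => hnl (hh.trans h.symm)) h]
    decide

/-- Splitting a sum over all edges into the term at `f` and the rest. -/
theorem sum_split {M : Type*} [AddCommMonoid M] (f : G.E) (h : G.E → M) :
    ∑ e : G.E, h e = h f + ∑ e' : {e : G.E // e ∉ ({f} : Set G.E)}, h e'.1 := by
  rw [← Finset.add_sum_erase Finset.univ h (Finset.mem_univ f)]
  congr 1
  exact Finset.sum_subtype (Finset.univ.erase f)
    (fun x => by simp [Set.mem_singleton_iff]) h

/-- The incident-edge finset. -/
def incEdges (G : MultiGraph) (v : G.V) : Finset G.E :=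
  Finset.univ.filter fun e => G.tail e = v ∨ G.head e = v

theorem mem_incEdges {v : G.V} {e : G.E} :
    e ∈ G.incEdges v ↔ (G.tail e = v ∨ G.head e = v) := by
  simp [incEdges]

/-- Conservation, localized to incident edges, in `ZMod 3` terms. -/
theorem flow_local {φ : G.E → ZMod 3} (hφ : G.IsFlow φ) (v : G.V) :
    ∑ e ∈ G.incEdges v, (G.sign v e : ZMod 3) * φ e = 0 := by
  have h0 := hφ v
  simp only [zsmul_eq_mul] at h0
  rw [← h0]
  apply Finset.sum_subset (Finset.subset_univ _)
  intro e _ he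
  rw [mem_incEdges] at he
  push_neg at he
  rw [sign_eq_zero he.1 he.2]
  simp

theorem dot_deltaV {φ : G.E → ZMod 3} (hφ : G.IsFlow φ) (v : G.V) :
    G.dot (G.deltaV v) φ = 0 := by
  have h0 := hφ v
  simp only [zsmul_eq_mul] at h0
  simpa [dot, deltaV] using h0

theorem dot_deltaPair (v : G.V) {e₁ e₂ : G.E} (h12 : e₁ ≠ e₂) (φ : G.E → ZMod 3) :
    G.dot (G.deltaPair v e₁ e₂) φ =
      (G.sign v e₁ : ZMod 3) * φ e₁ - (G.sign v e₂ : ZMod 3) * φ e₂ := by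
  unfold dot deltaPair
  rw [← Finset.sum_subset (Finset.subset_univ ({e₁, e₂} : Finset G.E))
    (by intro e _ he; simp only [Finset.mem_insert, Finset.mem_singleton] at he
        push_neg at he
        rw [if_neg he.1, if_neg he.2]; ring)]
  rw [Finset.sum_pair h12]
  rw [if_pos rfl, if_neg (Ne.symm h12), if_pos rfl]
  ring

end MultiGraph
namespace MultiGraph

variable {G : MultiGraph}

theorem sum_univ_congr {α M : Type*} [AddCommMonoid M] (inst1 inst2 : Fintype α)
    (F : α → M) :
    @Finset.sum α M _ (@Finset.univ α inst1) F = @Finset.sum α M _ (@Finset.univ α inst2) F := by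
  cases Subsingleton.elim inst1 inst2; rfl

section Quotient

variable {S : Set G.E} {π : G.V → G.V}

theorem quot_mk_eq_iff (hπ1 : ∀ a b, G.crel S a b → π a = π b)
    (hπ2 : ∀ v, Quot.mk (G.crel S) (π v) = Quot.mk (G.crel S) v)
    (x y : G.V) : Quot.mk (G.crel S) x = Quot.mk (G.crel S) y ↔ π x = π y := by
  constructor
  · intro h
    have := congrArg (Quot.lift π hπ1) h
    simpa using this
  · intro h
    rw [← hπ2 x, ← hπ2 y, h]

theorem contract_sign (hπ1 : ∀ a b, G.crel S a b → π a = π b)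
    (hπ2 : ∀ v, Quot.mk (G.crel S) (π v) = Quot.mk (G.crel S) v)
    (v : G.V) (e : (G.contract S).E) :
    (G.contract S).sign (Quot.mk (G.crel S) v) e =
      (if π (G.head e.1) = π v then 1 else 0) -
        (if π (G.tail e.1) = π v then 1 else 0) := by
  have ht := quot_mk_eq_iff hπ1 hπ2 (G.tail e.1) v
  have hh := quot_mk_eq_iff hπ1 hπ2 (G.head e.1) v
  unfold sign
  rw [contract_tail, contract_head]
  by_cases h1 : π (G.head e.1) = π v <;> by_cases h2 : π (G.tail e.1) = π v <;>
    split_ifs with ha hb <;> simp_all <;> exact absurd rfl ‹¬_›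

theorem contract_isFlow_iff {A : Type*} [AddCommGroup A]
    (hπ1 : ∀ a b, G.crel S a b → π a = π b)
    (hπ2 : ∀ v, Quot.mk (G.crel S) (π v) = Quot.mk (G.crel S) v)
    (ψ : (G.contract S).E → A) :
    (G.contract S).IsFlow ψ ↔ ∀ v : G.V,
      ∑ e : (G.contract S).E,
        ((if π (G.head e.1) = π v then (1:ℤ) else 0) -
          (if π (G.tail e.1) = π v then 1 else 0)) • ψ e = 0 := by
  have key : ∀ v : G.V, ∑ e : (G.contract S).E,
      (G.contract S).sign (Quot.mk (G.crel S) v) e • ψ e =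
      ∑ e : (G.contract S).E,
        ((if π (G.head e.1) = π v then (1:ℤ) else 0) -
          (if π (G.tail e.1) = π v then 1 else 0)) • ψ e := by
    intro v
    apply Finset.sum_congr rfl
    intro e _
    rw [contract_sign hπ1 hπ2]
  constructor
  · intro h v
    rw [← key v]
    exact h (Quot.mk (G.crel S) v)
  · intro h v'
    induction v' using Quot.ind with
    | _ v =>
      have : ∑ e : (G.contract S).E,
          (G.contract S).sign (Quot.mk (G.crel S) v) e • ψ e = 0 := by
        rw [key v]; exact h v
      exact this

end Quotient

theorem contract_sum_empty {M : Type*} [AddCommMonoid M] (F : G.E → M) :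
    ∑ e : (G.contract (∅ : Set G.E)).E, F e.1 = ∑ e : G.E, F e := by
  have h1 : ∑ e : (G.contract (∅ : Set G.E)).E, F e.1
      = ∑ e : {e : G.E // e ∉ (∅ : Set G.E)}, F e.1 := sum_univ_congr _ _ _
  rw [h1]
  exact Fintype.sum_equiv (Equiv.subtypeUnivEquiv (fun e => Set.notMem_empty e)) _ _
    (fun x => rfl)

/-- Splitting a sum over all edges into the term at `f` and the rest, contract version. -/
theorem sum_split_contract (f : G.E) {M : Type*} [AddCommMonoid M] (h : G.E → M) :
    ∑ e : G.E, h e = h f + ∑ e' : (G.contract ({f} : Set G.E)).E, h e'.1 := by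
  rw [sum_split f h]
  congr 1
  exact (sum_univ_congr _ _ _).symm

/-- Flows transfer across the trivial contraction. -/
theorem hasNZFlow_contract_empty_iff :
    (G.contract (∅ : Set G.E)).HasNZFlow (ZMod 3) ↔ G.HasNZFlow (ZMod 3) := by
  have hπ1 : ∀ a b, G.crel (∅ : Set G.E) a b → id a = id b := by
    rintro a b ⟨e, he, -⟩
    exact absurd he (Set.notMem_empty e)
  have hπ2 : ∀ v, Quot.mk (G.crel (∅ : Set G.E)) (id v) = Quot.mk (G.crel ∅) v :=
    fun v => rfl
  have key : ∀ ψ : (G.contract (∅ : Set G.E)).E → ZMod 3,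
      (G.contract (∅ : Set G.E)).IsFlow ψ ↔
        G.IsFlow (fun e => ψ ⟨e, Set.notMem_empty e⟩) := by
    intro ψ
    rw [contract_isFlow_iff hπ1 hπ2]
    unfold IsFlow
    apply forall_congr'
    intro v
    have heq : ∑ e : (G.contract (∅ : Set G.E)).E,
        ((if id (G.head e.1) = id v then (1:ℤ) else 0) -
          (if id (G.tail e.1) = id v then 1 else 0)) • ψ e =
        ∑ e : G.E, G.sign v e • ψ ⟨e, Set.notMem_empty e⟩ := by
      rw [← contract_sum_empty (G := G)
        (fun e => G.sign v e • ψ ⟨e, Set.notMem_empty e⟩)]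
      apply Finset.sum_congr rfl
      intro e _
      rfl
    rw [heq]
  constructor
  · rintro ⟨ψ, hψ, hnz⟩
    exact ⟨fun e => ψ ⟨e, Set.notMem_empty e⟩, (key ψ).1 hψ, fun e => hnz _⟩
  · rintro ⟨φ, hφ, hnz⟩
    refine ⟨fun e => φ e.1, ?_, fun e => hnz _⟩
    refine (key (fun e => φ e.1)).2 ?_
    intro v
    have := hφ v
    simpa using this

end MultiGraph
namespace MultiGraph

variable {G : MultiGraph}

/-- The key consequence of criticality: for each edge `f`, a flow vanishing
exactly at `f`; moreover `f` is not a loop. -/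
theorem exists_fflow (hno : ¬ G.HasNZFlow (ZMod 3)) (f : G.E)
    (h : (G.contract ({f} : Set G.E)).HasNZFlow (ZMod 3)) :
    G.tail f ≠ G.head f ∧ ∃ φ : G.E → ZMod 3, G.IsFlow φ ∧ φ f = 0 ∧
      ∀ e, e ≠ f → φ e ≠ 0 := by
  obtain ⟨ψ, hψflow, hψnz⟩ := h
  let π : G.V → G.V := fun v => if v = G.head f then G.tail f else v
  have hπval1 : ∀ v, v ≠ G.head f → π v = v := fun v hv => if_neg hv
  have hπval2 : π (G.head f) = G.tail f := if_pos rfl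
  have hπtf : ∀ v, π v = G.tail f ∨ π v = v := by
    intro v
    by_cases hh : v = G.head f
    · left; rw [hh, hπval2]
    · right; exact hπval1 v hh
  have hπ1 : ∀ a b, G.crel ({f} : Set G.E) a b → π a = π b := by
    rintro a b ⟨e, he, h1, h2⟩
    rw [Set.mem_singleton_iff] at he
    rw [he] at h1 h2
    have hb : π b = G.tail f := by rw [← h2, hπval2]
    have ha : π a = G.tail f := by
      by_cases hh : a = G.head f
      · rw [hh, hπval2]
      · rw [hπval1 a hh, ← h1]
    rw [ha, hb]
  have hπ2 : ∀ v, Quot.mk (G.crel ({f} : Set G.E)) (π v) =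
      Quot.mk (G.crel ({f} : Set G.E)) v := by
    intro v
    by_cases hh : v = G.head f
    · rw [hh, hπval2]
      exact Quot.sound ⟨f, rfl, rfl, rfl⟩
    · rw [hπval1 v hh]
  have hcons := (contract_isFlow_iff hπ1 hπ2 ψ).1 hψflow
  -- the deficiency at each vertex
  set A : G.V → ZMod 3 :=
    fun v => ∑ e : (G.contract ({f} : Set G.E)).E, G.sign v e.1 • ψ e with hAdef
  by_cases hl : G.tail f = G.head f
  · -- loop case: contradiction with `hno`
    exfalso
    have hπid : ∀ x, π x = x := by
      intro x
      rcases hπtf x with hx | hx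
      · rw [hx]
        by_cases hh : x = G.head f
        · rw [hh, ← hl]
        · exact absurd (by rw [hπval1 x hh] at hx; rw [hx, hl]) hh
      · exact hx
    have hA : ∀ v, A v = 0 := by
      intro v
      have hc := hcons v
      rw [← hc]
      apply Finset.sum_congr rfl
      intro e _
      congr 1
      unfold sign
      congr 1
      · exact if_congr (by rw [hπid, hπid]) rfl rfl
      · exact if_congr (by rw [hπid, hπid]) rfl rfl
    set φ : G.E → ZMod 3 := fun e => if h : e = f then 1
      else ψ ⟨e, fun hm => h (Set.mem_singleton_iff.mp hm)⟩ with hφdef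
    have hφf : φ f = 1 := dif_pos rfl
    have hφe : ∀ e' : (G.contract ({f} : Set G.E)).E, φ e'.1 = ψ e' := by
      intro e'
      have hne : ¬ e'.1 = f := fun hh => e'.2 (Set.mem_singleton_iff.mpr hh)
      show dite _ _ _ = _
      rw [dif_neg hne]
      exact congrArg ψ (Subtype.ext rfl)
    apply hno
    refine ⟨φ, ?_, ?_⟩
    · intro v
      rw [sum_split_contract f (fun e => G.sign v e • φ e)]
      have h2 : ∑ e' : (G.contract ({f} : Set G.E)).E, G.sign v e'.1 • φ e'.1 = A v :=
        Finset.sum_congr rfl (fun e' _ => by rw [hφe e'])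
      rw [h2, hA v, hφf, sign_eq_zero_of_loop hl]
      simp
    · intro e
      by_cases hh : e = f
      · rw [hh, hφf]; decide
      · have hne : ¬ e = f := hh
        show dite _ _ _ ≠ 0
        rw [dif_neg hne]
        exact hψnz _
  · -- `f` is not a loop; build the flow vanishing exactly at `f`
    refine ⟨hl, ?_⟩
    have hπt : π (G.tail f) = G.tail f := hπval1 _ hl
    have CL1 : ∀ v, v ≠ G.tail f → v ≠ G.head f → ∀ x, (π x = π v ↔ x = v) := by
      intro v hv1 hv2 x
      have hπv : π v = v := hπval1 v hv2
      rw [hπv]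
      constructor
      · intro hx
        by_cases hh : x = G.head f
        · rw [hh, hπval2] at hx
          exact absurd hx.symm hv1
        · rwa [hπval1 x hh] at hx
      · rintro rfl
        exact hπv
    have CL2 : ∀ x, (π x = π (G.tail f) ↔ (x = G.tail f ∨ x = G.head f)) := by
      intro x
      rw [hπt]
      constructor
      · intro hx
        by_cases hh : x = G.head f
        · exact Or.inr hh
        · rw [hπval1 x hh] at hx; exact Or.inl hx
      · rintro (rfl | rfl)
        · exact hπt
        · exact hπval2
    have hA : ∀ v, v ≠ G.tail f → v ≠ G.head f → A v = 0 := by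
      intro v hv1 hv2
      have hc := hcons v
      rw [← hc]
      apply Finset.sum_congr rfl
      intro e _
      congr 1
      unfold sign
      congr 1
      · exact if_congr (CL1 v hv1 hv2 _).symm rfl rfl
      · exact if_congr (CL1 v hv1 hv2 _).symm rfl rfl
    have hAtfhf : A (G.tail f) + A (G.head f) = 0 := by
      have hc := hcons (G.tail f)
      rw [← hc, hAdef]
      rw [← Finset.sum_add_distrib]
      apply Finset.sum_congr rfl
      intro e _
      rw [← add_smul]
      congr 1
      have hsplit : ∀ x : G.V, ((if π x = π (G.tail f) then (1:ℤ) else 0) =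
          (if x = G.tail f then 1 else 0) + (if x = G.head f then 1 else 0)) := by
        intro x
        rw [if_congr (CL2 x) rfl rfl]
        by_cases h1 : x = G.tail f
        · by_cases h2 : x = G.head f
          · exact absurd (h1.symm.trans h2) hl
          · simp [h1, h2, hl]
        · by_cases h2 : x = G.head f <;> simp [h1, h2, hl, Ne.symm hl]
      unfold sign
      rw [hsplit, hsplit]
      ring
    set φ : G.E → ZMod 3 := fun e => if h : e = f then A (G.tail f)
      else ψ ⟨e, fun hm => h (Set.mem_singleton_iff.mp hm)⟩ with hφdef
    have hφf : φ f = A (G.tail f) := dif_pos rfl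
    have hφe : ∀ e' : (G.contract ({f} : Set G.E)).E, φ e'.1 = ψ e' := by
      intro e'
      have hne : ¬ e'.1 = f := fun hh => e'.2 (Set.mem_singleton_iff.mpr hh)
      show dite _ _ _ = _
      rw [dif_neg hne]
      exact congrArg ψ (Subtype.ext rfl)
    have hφne : ∀ e, e ≠ f → φ e ≠ 0 := by
      intro e he
      show dite _ _ _ ≠ 0
      rw [dif_neg he]
      exact hψnz _
    have hflow : G.IsFlow φ := by
      intro v
      rw [sum_split_contract f (fun e => G.sign v e • φ e)]
      have h2 : ∑ e' : (G.contract ({f} : Set G.E)).E, G.sign v e'.1 • φ e'.1 = A v :=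
        Finset.sum_congr rfl (fun e' _ => by rw [hφe e'])
      rw [h2, hφf]
      by_cases hv1 : v = G.tail f
      · rw [hv1, sign_tail rfl (fun hh => hl hh.symm)]
        simp
      · by_cases hv2 : v = G.head f
        · rw [hv2, sign_head (fun hh => hl hh) rfl]
          simpa using hAtfhf
        · rw [sign_eq_zero (fun hh => hv1 hh.symm) (fun hh => hv2 hh.symm), hA v
            (fun hh => hv1 hh) (fun hh => hv2 hh)]
          simp
    by_cases hc : A (G.tail f) = 0
    · exact ⟨φ, hflow, by rw [hφf]; exact hc, hφne⟩
    · exfalso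
      apply hno
      refine ⟨φ, hflow, ?_⟩
      intro e
      by_cases hh : e = f
      · rw [hh, hφf]; exact hc
      · exact hφne e hh

end MultiGraph
namespace MultiGraph

theorem colorable_deleteEdges_empty_iff (D : MultiGraph) :
    (D.deleteEdges (∅ : Set D.E)).Colorable3 ↔ D.Colorable3 := by
  constructor
  · rintro ⟨f, hf⟩
    exact ⟨f, fun e => hf ⟨e, Set.notMem_empty e⟩⟩
  · rintro ⟨f, hf⟩
    exact ⟨f, fun e => hf e.1⟩

theorem subgraph_colorable_of_deleteEdges {D : MultiGraph} {SV : Set D.V} {SE : Set D.E}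
    (hSE : ∀ e ∈ SE, D.tail e ∈ SV ∧ D.head e ∈ SV) {x : D.E} (hx : x ∉ SE)
    (h : (D.deleteEdges {x}).Colorable3) : (D.subgraph SV SE hSE).Colorable3 := by
  obtain ⟨f, hf⟩ := h
  refine ⟨fun v => f v.1, fun e => ?_⟩
  exact hf ⟨e.1, fun hm => hx (Set.mem_singleton_iff.mp hm ▸ e.2)⟩

theorem colorable_deleteEdges_of_subgraph {D : MultiGraph} (x : D.E)
    (h : (D.subgraph Set.univ {d | d ≠ x}
      (fun _ _ => ⟨Set.mem_univ _, Set.mem_univ _⟩)).Colorable3) :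
    (D.deleteEdges {x}).Colorable3 := by
  obtain ⟨f, hf⟩ := h
  refine ⟨fun v => f ⟨v, Set.mem_univ v⟩, fun e => ?_⟩
  exact hf ⟨e.1, fun hm => e.2 (Set.mem_singleton_iff.mpr hm)⟩

theorem exists_incident_of_connected {D : MultiGraph} (hc : D.Connected) (v : D.V)
    (hw : ∃ w : D.V, w ≠ v) : ∃ d : D.E, D.tail d = v ∨ D.head d = v := by
  obtain ⟨w, hwv⟩ := hw
  rcases (Relation.ReflTransGen.cases_head (hc.2 v w)) with heq | ⟨x, hadj, -⟩
  · exact absurd heq.symm hwv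
  · obtain ⟨d, hd | hd⟩ := hadj
    · exact ⟨d, Or.inl hd.1⟩
    · exact ⟨d, Or.inr hd.2⟩

/-- Part 1 of the theorem: duality between flow-criticality and 4-criticality. -/
theorem part1 (P : PlaneDualPair) : P.G.FlowCritical (ZMod 3) ↔ FourCritical P.D := by
  have tutte0 := P.tutte ∅
  rw [Set.image_empty] at tutte0
  have hDG : P.D.Colorable3 ↔ P.G.HasNZFlow (ZMod 3) :=
    (colorable_deleteEdges_empty_iff P.D).symm.trans
      (tutte0.trans hasNZFlow_contract_empty_iff)
  constructor
  · intro hcrit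
    obtain ⟨hconn, hno, hcon⟩ := hcrit
    constructor
    · intro hcol
      exact hno (hDG.1 hcol)
    · intro SV SE hSE hproper
      by_cases hSEuniv : SE = Set.univ
      · have hSV : SV ≠ Set.univ := by
          rcases hproper with h | h
          · exact h
          · exact absurd hSEuniv h
        obtain ⟨v, hv⟩ : ∃ v, v ∉ SV := by
          by_contra hcon'
          push_neg at hcon'
          exact hSV (Set.eq_univ_iff_forall.mpr hcon')
        by_cases hinc : ∃ d : P.D.E, P.D.tail d = v ∨ P.D.head d = v
        · obtain ⟨d, hd⟩ := hinc
          have hmem : d ∈ SE := by rw [hSEuniv]; trivial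
          rcases hd with hd | hd
          · exact absurd (hd ▸ (hSE d hmem).1) hv
          · exact absurd (hd ▸ (hSE d hmem).2) hv
        · have hsing : ∀ w : P.D.V, w = v := by
            intro w
            by_contra hwv
            exact hinc (exists_incident_of_connected P.connD v ⟨w, hwv⟩)
          refine ⟨fun _ => 0, fun e => ?_⟩
          exact absurd ((hsing (P.D.tail e.1)) ▸ (hSE e.1 e.2).1) hv
      · obtain ⟨d₀, hd₀⟩ : ∃ d, d ∉ SE := by
          by_contra hcon'
          push_neg at hcon'
          exact hSEuniv (Set.eq_univ_iff_forall.mpr hcon')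
        have h1 := hcon (P.eEquiv.symm d₀)
        have h2 := (P.tutte {P.eEquiv.symm d₀}).2 h1
        rw [Set.image_singleton, Equiv.apply_symm_apply] at h2
        exact subgraph_colorable_of_deleteEdges hSE hd₀ h2
  · intro hfour
    obtain ⟨hncol, hsub⟩ := hfour
    refine ⟨P.conn, ?_, ?_⟩
    · intro hflow
      exact hncol (hDG.2 hflow)
    · intro e
      have hproper : ({d | d ≠ P.eEquiv e} : Set P.D.E) ≠ Set.univ := by
        intro hh
        have : P.eEquiv e ∈ ({d | d ≠ P.eEquiv e} : Set P.D.E) := by rw [hh]; trivial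
        exact this rfl
      have hcolsub := hsub Set.univ {d | d ≠ P.eEquiv e}
        (fun _ _ => ⟨Set.mem_univ _, Set.mem_univ _⟩) (Or.inr hproper)
      have hdel := colorable_deleteEdges_of_subgraph (P.eEquiv e) hcolsub
      have h2 := (P.tutte {e}).1 (by rwa [Set.image_singleton])
      exact h2

end MultiGraph
namespace MultiGraph

variable {G : MultiGraph}

theorem Z1 : ∀ A B C : ZMod 3, A ≠ 0 → B ≠ 0 → C ≠ 0 → A + B + C = 0 → A = B := by decide

theorem Z2 : ∀ X Y : ZMod 3, X ≠ 0 → X + Y = 0 → X - Y ≠ 0 := by decide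

theorem flow_triple {v : G.V} {a b c : G.E} (hab : a ≠ b) (hac : a ≠ c) (hbc : b ≠ c)
    (htr : G.incEdges v = {a, b, c}) {φ : G.E → ZMod 3} (hφ : G.IsFlow φ) :
    (G.sign v a : ZMod 3) * φ a + (G.sign v b : ZMod 3) * φ b +
      (G.sign v c : ZMod 3) * φ c = 0 := by
  have h := flow_local hφ v
  rw [htr, Finset.sum_insert (by simp [hab, hac]), Finset.sum_pair hbc, ← add_assoc] at h
  exact h

theorem mem_triple_incident {v : G.V} {a b c x : G.E}
    (htr : G.incEdges v = {a, b, c}) (hx : x = a ∨ x = b ∨ x = c) :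
    G.tail x = v ∨ G.head x = v := by
  apply mem_incEdges.mp
  rw [htr]
  rcases hx with h | h | h <;> simp [h]

/-- If a flow is nonzero on all three edges at a degree-3 vertex, then the pair
vector is orthogonal to it. -/
theorem dot_pair_eq_zero {v : G.V} {a b c : G.E} (hab : a ≠ b) (hac : a ≠ c) (hbc : b ≠ c)
    (htr : G.incEdges v = {a, b, c}) {φ : G.E → ZMod 3} (hφ : G.IsFlow φ)
    (hnl : ∀ e : G.E, G.tail e ≠ G.head e)
    (ha : φ a ≠ 0) (hb : φ b ≠ 0) (hc : φ c ≠ 0) :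
    G.dot (G.deltaPair v a b) φ = 0 := by
  rw [dot_deltaPair v hab]
  have h3 := flow_triple hab hac hbc htr hφ
  have sa := sign_cast_ne_zero (hnl a) (mem_triple_incident htr (Or.inl rfl))
  have sb := sign_cast_ne_zero (hnl b) (mem_triple_incident htr (Or.inr (Or.inl rfl)))
  have sc := sign_cast_ne_zero (hnl c) (mem_triple_incident htr (Or.inr (Or.inr rfl)))
  have heq := Z1 _ _ _ (mul_ne_zero sa ha) (mul_ne_zero sb hb) (mul_ne_zero sc hc) h3
  rw [heq, sub_self]

/-- If a flow vanishes exactly at one of the three edges at a degree-3 vertex,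
then the pair vector is not orthogonal to it. -/
theorem dot_pair_ne_zero {v : G.V} {a b c f : G.E} (hab : a ≠ b) (hac : a ≠ c) (hbc : b ≠ c)
    (htr : G.incEdges v = {a, b, c}) (hf : f = a ∨ f = b ∨ f = c) {φ : G.E → ZMod 3}
    (hφ : G.IsFlow φ) (hnl : ∀ e : G.E, G.tail e ≠ G.head e)
    (hφ0 : φ f = 0) (hφnz : ∀ e, e ≠ f → φ e ≠ 0) :
    G.dot (G.deltaPair v a b) φ ≠ 0 := by
  rw [dot_deltaPair v hab]
  have h3 := flow_triple hab hac hbc htr hφ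
  have sa := sign_cast_ne_zero (hnl a) (mem_triple_incident htr (Or.inl rfl))
  have sb := sign_cast_ne_zero (hnl b) (mem_triple_incident htr (Or.inr (Or.inl rfl)))
  rcases hf with rfl | rfl | rfl
  · rw [hφ0, mul_zero, zero_sub]
    exact neg_ne_zero.mpr (mul_ne_zero sb (hφnz b (Ne.symm hab)))
  · rw [hφ0, mul_zero, sub_zero]
    exact mul_ne_zero sa (hφnz a hab)
  · rw [hφ0, mul_zero, add_zero] at h3
    exact Z2 _ _ (mul_ne_zero sa (hφnz a hac)) h3

/-- Every vertex of a flow-critical-like graph has at least 3 incident edges. -/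
theorem three_le_incEdges (hconn : G.Connected)
    (hfl : ∀ f : G.E, ∃ φ : G.E → ZMod 3, G.IsFlow φ ∧ φ f = 0 ∧ ∀ e, e ≠ f → φ e ≠ 0)
    (hnl : ∀ e : G.E, G.tail e ≠ G.head e) (hE2 : 2 ≤ Fintype.card G.E) (v : G.V) :
    3 ≤ (G.incEdges v).card := by
  by_contra hlt
  push_neg at hlt
  have hc : (G.incEdges v).card = 0 ∨ (G.incEdges v).card = 1 ∨
      (G.incEdges v).card = 2 := by omega
  rcases hc with h0 | h1 | h2
  · -- isolated vertex
    rw [Finset.card_eq_zero] at h0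
    by_cases hw : ∃ w : G.V, w ≠ v
    · obtain ⟨d, hd⟩ := exists_incident_of_connected hconn v hw
      have : d ∈ G.incEdges v := mem_incEdges.mpr hd
      rw [h0] at this
      exact absurd this (Finset.notMem_empty d)
    · -- all vertices equal v, so every edge is incident, contradiction with card E ≥ 2
      push_neg at hw
      have : ∀ e : G.E, e ∈ G.incEdges v := by
        intro e
        exact mem_incEdges.mpr (Or.inl (hw _))
      obtain ⟨e⟩ := Fintype.card_pos_iff.mp (by omega : 0 < Fintype.card G.E)
      rw [h0] at this
      exact absurd (this e) (Finset.notMem_empty e)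
  · rw [Finset.card_eq_one] at h1
    obtain ⟨f, hf⟩ := h1
    obtain ⟨e', he'⟩ := Fintype.exists_ne_of_one_lt_card (by omega) f
    obtain ⟨φ, hφflow, hφ0, hφnz⟩ := hfl e'
    have h := flow_local hφflow v
    rw [hf, Finset.sum_singleton] at h
    have hs := sign_cast_ne_zero (hnl f)
      (mem_incEdges.mp (hf ▸ Finset.mem_singleton_self f))
    have : φ f = 0 := by
      rcases mul_eq_zero.mp h with h' | h'
      · exact absurd h' hs
      · exact h'
    exact hφnz f (Ne.symm he') this
  · rw [Finset.card_eq_two] at h2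
    obtain ⟨f, g, hfg, hf⟩ := h2
    obtain ⟨φ, hφflow, hφ0, hφnz⟩ := hfl f
    have h := flow_local hφflow v
    rw [hf, Finset.sum_pair hfg, hφ0, mul_zero, zero_add] at h
    have hs := sign_cast_ne_zero (hnl g)
      (mem_incEdges.mp (hf ▸ (by simp : g ∈ ({f, g} : Finset G.E))))
    have : φ g = 0 := by
      rcases mul_eq_zero.mp h with h' | h'
      · exact absurd h' hs
      · exact h'
    exact hφnz g (Ne.symm hfg) this

/-- Handshake: the incidence count sums to twice the number of edges. -/
theorem handshake (hnl : ∀ e : G.E, G.tail e ≠ G.head e) :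
    ∑ v : G.V, (G.incEdges v).card = 2 * Fintype.card G.E := by
  have h1 : ∀ v : G.V, (G.incEdges v).card =
      (Finset.univ.filter fun e : G.E => G.tail e = v).card +
      (Finset.univ.filter fun e : G.E => G.head e = v).card := by
    intro v
    rw [incEdges, Finset.filter_or]
    rw [Finset.card_union_of_disjoint]
    rw [Finset.disjoint_filter]
    intro e _ h1 h2
    exact hnl e (h1.trans h2.symm)
  rw [Finset.sum_congr rfl (fun v _ => h1 v), Finset.sum_add_distrib]
  have h2 : ∑ v : G.V, (Finset.univ.filter fun e : G.E => G.tail e = v).card =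
      Fintype.card G.E := by
    rw [← Finset.card_univ]
    exact (Finset.card_eq_sum_card_fiberwise (fun e _ => Finset.mem_univ (G.tail e))).symm
  have h3 : ∑ v : G.V, (Finset.univ.filter fun e : G.E => G.head e = v).card =
      Fintype.card G.E := by
    rw [← Finset.card_univ]
    exact (Finset.card_eq_sum_card_fiberwise (fun e _ => Finset.mem_univ (G.head e))).symm
  rw [h2, h3]
  ring

/-- A boundary edge on a path from the support to the outside. -/
theorem exists_boundary_edge (Pr : G.V → Prop) {s t : G.V}
    (hpath : Relation.ReflTransGen G.Adj s t) (hs : Pr s) (ht : ¬ Pr t) :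
    ∃ (ε : G.E) (x y : G.V), Pr x ∧ ¬ Pr y ∧
      ((G.tail ε = x ∧ G.head ε = y) ∨ (G.tail ε = y ∧ G.head ε = x)) := by
  revert ht
  induction hpath with
  | refl => intro ht; exact absurd hs ht
  | @tail b c h₁ h₂ ih =>
    intro ht
    by_cases hPb : Pr b
    · obtain ⟨e, he⟩ := h₂
      rcases he with ⟨he1, he2⟩ | ⟨he1, he2⟩
      · exact ⟨e, b, c, hPb, ht, Or.inl ⟨he1, he2⟩⟩
      · exact ⟨e, b, c, hPb, ht, Or.inr ⟨he1, he2⟩⟩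
    · exact ih hPb

end MultiGraph
namespace MultiGraph

variable {G : MultiGraph}

/-- The dot product as a linear map in the first argument. -/
def dotL (G : MultiGraph) (φ : G.E → ZMod 3) : (G.E → ZMod 3) →ₗ[ZMod 3] ZMod 3 where
  toFun c := G.dot c φ
  map_add' c c' := by
    unfold dot
    rw [← Finset.sum_add_distrib]
    apply Finset.sum_congr rfl
    intro e _
    rw [Pi.add_apply, add_mul]
  map_smul' r c := by
    unfold dot
    simp only [Pi.smul_apply, smul_eq_mul, RingHom.id_apply]
    rw [Finset.mul_sum]
    apply Finset.sum_congr rfl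
    intro e _
    ring

theorem dotL_apply (φ c : G.E → ZMod 3) : G.dotL φ c = G.dot c φ := rfl

/-- Linear independence of the cut vectors together with chosen pair vectors. -/
theorem family_li (hconn : G.Connected)
    (hfl : ∀ f : G.E, ∃ φ : G.E → ZMod 3, G.IsFlow φ ∧ φ f = 0 ∧ ∀ e, e ≠ f → φ e ≠ 0)
    (hnl : ∀ e : G.E, G.tail e ≠ G.head e) (v₀ : G.V)
    (a b c : {v : G.V // (G.incEdges v).card = 3 ∧ v ≠ v₀} → G.E)
    (hab : ∀ v, a v ≠ b v) (hac : ∀ v, a v ≠ c v) (hbc : ∀ v, b v ≠ c v)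
    (htr : ∀ v, G.incEdges v.1 = {a v, b v, c v}) :
    LinearIndependent (ZMod 3)
      (Sum.elim (fun v : {v : G.V // v ≠ v₀} => G.deltaV v.1)
        (fun w : {v : G.V // (G.incEdges v).card = 3 ∧ v ≠ v₀} =>
          G.deltaPair w.1 (a w) (b w))) := by
  classical
  set ν : ({v : G.V // v ≠ v₀} ⊕ {v : G.V // (G.incEdges v).card = 3 ∧ v ≠ v₀}) →
      (G.E → ZMod 3) :=
    Sum.elim (fun v => G.deltaV v.1) (fun w => G.deltaPair w.1 (a w) (b w)) with hνdef
  show LinearIndependent (ZMod 3) ν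
  rw [Fintype.linearIndependent_iff]
  intro g hg
  have hdot : ∀ φ : G.E → ZMod 3,
      (∑ v' : {v : G.V // v ≠ v₀}, g (Sum.inl v') * G.dot (G.deltaV v'.1) φ) +
      (∑ w' : {v : G.V // (G.incEdges v).card = 3 ∧ v ≠ v₀},
        g (Sum.inr w') * G.dot (G.deltaPair w'.1 (a w') (b w')) φ) = 0 := by
    intro φ
    have h0 : (G.dotL φ) (∑ i, g i • ν i) = 0 := by rw [hg]; exact map_zero _
    rw [map_sum] at h0
    simp only [map_smul, smul_eq_mul] at h0
    rw [Fintype.sum_sum_type] at h0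
    exact h0
  -- Step A: the pair coefficients vanish
  have hcoef : ∀ w : {v : G.V // (G.incEdges v).card = 3 ∧ v ≠ v₀},
      g (Sum.inr w) = 0 := by
    by_contra hcon
    push_neg at hcon
    obtain ⟨w, hw⟩ := hcon
    set Pr : G.V → Prop := fun z =>
      ∃ h : ((G.incEdges z).card = 3 ∧ z ≠ v₀), g (Sum.inr ⟨z, h⟩) ≠ 0 with hPrdef
    have hPw : Pr w.1 := ⟨w.2, hw⟩
    have hPv₀ : ¬ Pr v₀ := fun hh => hh.1.2 rfl
    obtain ⟨ε, x, y, hPx, hPy, hxy⟩ :=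
      exists_boundary_edge Pr (hconn.2 w.1 v₀) hPw hPv₀
    obtain ⟨hx3, hgx⟩ := hPx
    set xJ : {v : G.V // (G.incEdges v).card = 3 ∧ v ≠ v₀} := ⟨x, hx3⟩ with hxJdef
    obtain ⟨φ, hφflow, hφ0, hφnz⟩ := hfl ε
    have h0 := hdot φ
    have hfirst : (∑ v' : {v : G.V // v ≠ v₀},
        g (Sum.inl v') * G.dot (G.deltaV v'.1) φ) = 0 := by
      apply Finset.sum_eq_zero
      intro v' _
      rw [dot_deltaV hφflow, mul_zero]
    have hεx : ε ∈ G.incEdges x := by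
      rcases hxy with ⟨h1, h2⟩ | ⟨h1, h2⟩
      · exact mem_incEdges.mpr (Or.inl h1)
      · exact mem_incEdges.mpr (Or.inr h2)
    have hsecond : (∑ w' : {v : G.V // (G.incEdges v).card = 3 ∧ v ≠ v₀},
        g (Sum.inr w') * G.dot (G.deltaPair w'.1 (a w') (b w')) φ) =
        g (Sum.inr xJ) * G.dot (G.deltaPair xJ.1 (a xJ) (b xJ)) φ := by
      apply Finset.sum_eq_single
      · intro w' _ hne
        by_cases hinc : ε ∈ G.incEdges w'.1
        · have hwxy : w'.1 = x ∨ w'.1 = y := by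
            rcases mem_incEdges.mp hinc with h | h <;>
              rcases hxy with ⟨h1, h2⟩ | ⟨h1, h2⟩
            · exact Or.inl (h.symm.trans h1)
            · exact Or.inr (h.symm.trans h1)
            · exact Or.inr (h.symm.trans h2)
            · exact Or.inl (h.symm.trans h2)
          rcases hwxy with hh | hh
          · exact absurd (Subtype.ext hh) hne
          · have hweq : w' = ⟨y, hh ▸ w'.2⟩ := Subtype.ext hh
            have : g (Sum.inr w') = 0 := by
              by_contra hgz
              rw [hweq] at hgz
              exact hPy ⟨_, hgz⟩
            rw [this, zero_mul]
        · have hdot0 : G.dot (G.deltaPair w'.1 (a w') (b w')) φ = 0 := by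
            apply dot_pair_eq_zero (hab w') (hac w') (hbc w') (htr w') hφflow hnl
            · apply hφnz
              intro hh
              apply hinc
              rw [← hh, htr w']
              simp
            · apply hφnz
              intro hh
              apply hinc
              rw [← hh, htr w']
              simp
            · apply hφnz
              intro hh
              apply hinc
              rw [← hh, htr w']
              simp
          rw [hdot0, mul_zero]
      · intro hnotin
        exact absurd (Finset.mem_univ xJ) hnotin
    rw [hfirst, hsecond, zero_add] at h0
    have hεmem : ε = a xJ ∨ ε = b xJ ∨ ε = c xJ := by
      have := hεx
      rw [show x = xJ.1 from rfl, htr xJ] at this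
      simpa using this
    have hdne : G.dot (G.deltaPair xJ.1 (a xJ) (b xJ)) φ ≠ 0 :=
      dot_pair_ne_zero (hab xJ) (hac xJ) (hbc xJ) (htr xJ) hεmem hφflow hnl hφ0 hφnz
    rcases mul_eq_zero.mp h0 with h' | h'
    · exact hgx h'
    · exact hdne h'
  -- Step B: the cut coefficients vanish
  have hg2 : ∑ v' : {v : G.V // v ≠ v₀}, g (Sum.inl v') • G.deltaV v'.1 = 0 := by
    rw [Fintype.sum_sum_type] at hg
    have hz : (∑ w' : {v : G.V // (G.incEdges v).card = 3 ∧ v ≠ v₀},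
        g (Sum.inr w') • ν (Sum.inr w')) = 0 := by
      apply Finset.sum_eq_zero
      intro w' _
      rw [hcoef w', zero_smul]
    rw [hz, add_zero] at hg
    exact hg
  set cc : G.V → ZMod 3 := fun v => if h : v = v₀ then 0 else g (Sum.inl ⟨v, h⟩)
    with hccdef
  have hccv₀ : cc v₀ = 0 := dif_pos rfl
  have hccval : ∀ v' : {v : G.V // v ≠ v₀}, cc v'.1 = g (Sum.inl v') := by
    intro v'
    show dite _ _ _ = _
    rw [dif_neg v'.2]
  have hedge : ∀ e : G.E, cc (G.head e) = cc (G.tail e) := by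
    intro e
    have ha : ∑ v' : {v : G.V // v ≠ v₀}, cc v'.1 * ((G.sign v'.1 e : ZMod 3)) = 0 := by
      have h0 := congrFun hg2 e
      simp only [Finset.sum_apply, Pi.zero_apply, Pi.smul_apply, smul_eq_mul] at h0
      calc ∑ v' : {v : G.V // v ≠ v₀}, cc v'.1 * ((G.sign v'.1 e : ZMod 3))
          = ∑ v' : {v : G.V // v ≠ v₀}, g (Sum.inl v') * G.deltaV v'.1 e :=
            Finset.sum_congr rfl (fun v' _ => by rw [hccval v']; rfl)
        _ = 0 := h0
    have h1 : ∑ v : G.V, cc v * ((G.sign v e : ZMod 3)) = 0 := by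
      rw [← Finset.add_sum_erase Finset.univ _ (Finset.mem_univ v₀), hccv₀, zero_mul,
        zero_add]
      exact (Finset.sum_subtype (p := fun v => v ≠ v₀) (Finset.univ.erase v₀)
        (fun x => by simp) (fun v => cc v * (G.sign v e : ZMod 3))).trans ha
    have h2 : ∑ v : G.V, cc v * ((G.sign v e : ZMod 3)) =
        cc (G.head e) - cc (G.tail e) := by
      have hcast : ∀ v : G.V, ((G.sign v e : ZMod 3)) =
          (if G.head e = v then (1 : ZMod 3) else 0) -
          (if G.tail e = v then (1 : ZMod 3) else 0) := by
        intro v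
        unfold sign
        push_cast [apply_ite (Int.cast : ℤ → ZMod 3)]
        rfl
      rw [Finset.sum_congr rfl (fun v _ => by rw [hcast v, mul_sub])]
      rw [Finset.sum_sub_distrib]
      congr 1
      · rw [Finset.sum_congr rfl (fun v _ => by rw [mul_ite, mul_one, mul_zero])]
        rw [Finset.sum_ite_eq]
        simp
      · rw [Finset.sum_congr rfl (fun v _ => by rw [mul_ite, mul_one, mul_zero])]
        rw [Finset.sum_ite_eq]
        simp
    rw [h2] at h1
    linear_combination h1
  have hconst : ∀ p q : G.V, Relation.ReflTransGen G.Adj p q → cc p = cc q := by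
    intro p q h
    induction h with
    | refl => rfl
    | @tail m r h₁ h₂ ih =>
      rw [ih]
      obtain ⟨e, he⟩ := h₂
      rcases he with ⟨h1, h2⟩ | ⟨h1, h2⟩
      · rw [← h1, ← h2, hedge e]
      · rw [← h1, ← h2, hedge e]
  intro i
  rcases i with v' | w'
  · rw [← hccval v']
    rw [hconst v'.1 v₀ (hconn.2 v'.1 v₀), hccv₀]
  · exact hcoef w'

/-- The main dimension count: the graph has at least `n - 1 + n₃'` edges. -/
theorem card_add_card_le (hconn : G.Connected)
    (hfl : ∀ f : G.E, ∃ φ : G.E → ZMod 3, G.IsFlow φ ∧ φ f = 0 ∧ ∀ e, e ≠ f → φ e ≠ 0)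
    (hnl : ∀ e : G.E, G.tail e ≠ G.head e) (v₀ : G.V) :
    Fintype.card G.V + Fintype.card {v : G.V // (G.incEdges v).card = 3 ∧ v ≠ v₀}
      ≤ Fintype.card G.E + 1 := by
  classical
  have H : ∀ v : {v : G.V // (G.incEdges v).card = 3 ∧ v ≠ v₀},
      ∃ x y z : G.E, x ≠ y ∧ x ≠ z ∧ y ≠ z ∧ G.incEdges v.1 = {x, y, z} :=
    fun v => Finset.card_eq_three.mp v.2.1
  choose a b c hab hac hbc htr using H
  have hli := family_li hconn hfl hnl v₀ a b c hab hac hbc htr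
  have hcard := hli.fintype_card_le_finrank
  rw [Module.finrank_pi] at hcard
  rw [Fintype.card_sum] at hcard
  have hV : Fintype.card {v : G.V // v ≠ v₀} = Fintype.card G.V - 1 := by
    rw [Fintype.card_subtype_compl, Fintype.card_subtype_eq]
  rw [hV] at hcard
  have hV1 : 1 ≤ Fintype.card G.V := Fintype.card_pos_iff.mpr hconn.1
  omega

end MultiGraph
namespace MultiGraph

variable {G : MultiGraph}

theorem dot_single (e : G.E) (φ : G.E → ZMod 3) :
    G.dot (fun e' => if e' = e then 1 else 0) φ = φ e := by
  unfold dot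
  rw [Finset.sum_congr rfl (fun e' _ => by rw [ite_mul, one_mul, zero_mul])]
  rw [Finset.sum_ite_eq']
  simp

theorem isFlow_combination {φ φ' : G.E → ZMod 3} (hφ : G.IsFlow φ) (hφ' : G.IsFlow φ')
    (r r' : ZMod 3) : G.IsFlow (fun e => r * φ e - r' * φ' e) := by
  intro v
  have h1 := hφ v
  have h2 := hφ' v
  have : ∑ e : G.E, G.sign v e • (r * φ e - r' * φ' e) =
      r * (∑ e : G.E, G.sign v e • φ e) - r' * (∑ e : G.E, G.sign v e • φ' e) := by
    rw [Finset.mul_sum, Finset.mul_sum, ← Finset.sum_sub_distrib]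
    apply Finset.sum_congr rfl
    intro e _
    simp only [zsmul_eq_mul]
    ring
  rw [this, h1, h2, mul_zero, mul_zero, sub_zero]

theorem dot_combination (c φ φ' : G.E → ZMod 3) (r r' : ZMod 3) :
    G.dot c (fun e => r * φ e - r' * φ' e) = r * G.dot c φ - r' * G.dot c φ' := by
  unfold dot
  rw [Finset.mul_sum, Finset.mul_sum, ← Finset.sum_sub_distrib]
  apply Finset.sum_congr rfl
  intro e _
  ring

/-- In the tight case the family is a basis, so a flow orthogonal to all the
pair vectors is zero. -/
theorem flow_zero_tight (hconn : G.Connected)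
    (hfl : ∀ f : G.E, ∃ φ : G.E → ZMod 3, G.IsFlow φ ∧ φ f = 0 ∧ ∀ e, e ≠ f → φ e ≠ 0)
    (hnl : ∀ e : G.E, G.tail e ≠ G.head e) (v₀ : G.V)
    (a b c : {v : G.V // (G.incEdges v).card = 3 ∧ v ≠ v₀} → G.E)
    (hab : ∀ v, a v ≠ b v) (hac : ∀ v, a v ≠ c v) (hbc : ∀ v, b v ≠ c v)
    (htr : ∀ v, G.incEdges v.1 = {a v, b v, c v})
    (hcardeq : Fintype.card
      ({v : G.V // v ≠ v₀} ⊕ {v : G.V // (G.incEdges v).card = 3 ∧ v ≠ v₀}) =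
      Fintype.card G.E)
    (hEpos : 0 < Fintype.card G.E)
    {φ : G.E → ZMod 3} (hφ : G.IsFlow φ)
    (hd : ∀ w : {v : G.V // (G.incEdges v).card = 3 ∧ v ≠ v₀},
      G.dot (G.deltaPair w.1 (a w) (b w)) φ = 0) : φ = 0 := by
  classical
  have hli := family_li hconn hfl hnl v₀ a b c hab hac hbc htr
  set ν : ({v : G.V // v ≠ v₀} ⊕ {v : G.V // (G.incEdges v).card = 3 ∧ v ≠ v₀}) →
      (G.E → ZMod 3) :=
    Sum.elim (fun v => G.deltaV v.1) (fun w => G.deltaPair w.1 (a w) (b w)) with hνdef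
  have hne : Nonempty
      ({v : G.V // v ≠ v₀} ⊕ {v : G.V // (G.incEdges v).card = 3 ∧ v ≠ v₀}) := by
    apply Fintype.card_pos_iff.mp
    omega
  have hcard2 : Fintype.card
      ({v : G.V // v ≠ v₀} ⊕ {v : G.V // (G.incEdges v).card = 3 ∧ v ≠ v₀}) =
      Module.finrank (ZMod 3) (G.E → ZMod 3) := by
    rw [Module.finrank_pi]
    exact hcardeq
  let B := basisOfLinearIndependentOfCardEqFinrank hli hcard2
  have hspan : Submodule.span (ZMod 3) (Set.range ν) = ⊤ := by
    have hB : ⇑B = ν := coe_basisOfLinearIndependentOfCardEqFinrank hli hcard2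
    rw [← hB]
    exact B.span_eq
  have hvanish : ∀ i, G.dotL φ (ν i) = 0 := by
    rintro (v' | w')
    · exact dot_deltaV hφ v'.1
    · exact hd w'
  have hall : ∀ x : G.E → ZMod 3, G.dotL φ x = 0 := by
    intro x
    have hx : x ∈ Submodule.span (ZMod 3) (Set.range ν) := by
      rw [hspan]; trivial
    induction hx using Submodule.span_induction with
    | mem y hy =>
      obtain ⟨i, rfl⟩ := hy
      exact hvanish i
    | zero => exact map_zero _
    | add y z _ _ hy hz => rw [map_add, hy, hz, add_zero]
    | smul r y _ hy => rw [map_smul, hy, smul_zero]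
  funext e
  have := hall (fun e' => if e' = e then 1 else 0)
  rw [dotL_apply, dot_single] at this
  exact this

end MultiGraph
namespace MultiGraph

variable {G : MultiGraph}

/-- The tight case of the counting argument forces `n = 5`, `m = 8`. -/
theorem tight_case (hconn : G.Connected)
    (hfl : ∀ f : G.E, ∃ φ : G.E → ZMod 3, G.IsFlow φ ∧ φ f = 0 ∧ ∀ e, e ≠ f → φ e ≠ 0)
    (hnl : ∀ e : G.E, G.tail e ≠ G.head e) (hE2 : 2 ≤ Fintype.card G.E)
    (v₀ : G.V) (hv₀ : (G.incEdges v₀).card ≠ 3)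
    (hmin : ∀ v : G.V, 3 ≤ (G.incEdges v).card)
    (hmax : ∀ v : G.V, (G.incEdges v).card ≤ 4)
    (hm1 : Fintype.card G.E + 1 =
      Fintype.card G.V + (Finset.univ.filter fun v : G.V => (G.incEdges v).card = 3).card) :
    Fintype.card G.V = 5 ∧ Fintype.card G.E = 8 := by
  classical
  set n := Fintype.card G.V with hndef
  set m := Fintype.card G.E with hmdef
  set V3 := Finset.univ.filter fun v : G.V => (G.incEdges v).card = 3 with hV3def
  set n₃ := V3.card with hn₃def
  have hn1 : 1 ≤ n := Fintype.card_pos_iff.mpr hconn.1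
  have hn3n : n₃ ≤ n := by
    rw [hn₃def, hndef, ← Finset.card_univ]
    exact Finset.card_filter_le _ _
  have hJ : Fintype.card {v : G.V // (G.incEdges v).card = 3 ∧ v ≠ v₀} = n₃ := by
    rw [Fintype.card_subtype]
    congr 1
    ext v
    simp only [Finset.mem_filter, Finset.mem_univ, true_and, hV3def]
    exact ⟨fun h => h.1, fun h => ⟨h, fun he => hv₀ (he ▸ h)⟩⟩
  have H : ∀ v : {v : G.V // (G.incEdges v).card = 3 ∧ v ≠ v₀},
      ∃ x y z : G.E, x ≠ y ∧ x ≠ z ∧ y ≠ z ∧ G.incEdges v.1 = {x, y, z} :=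
    fun v => Finset.card_eq_three.mp v.2.1
  choose a b c hab hac hbc htr using H
  have hcardeq : Fintype.card
      ({v : G.V // v ≠ v₀} ⊕ {v : G.V // (G.incEdges v).card = 3 ∧ v ≠ v₀}) = m := by
    rw [Fintype.card_sum, Fintype.card_subtype_compl, Fintype.card_subtype_eq, hJ]
    omega
  have hzero : ∀ {φ : G.E → ZMod 3}, G.IsFlow φ →
      (∀ w : {v : G.V // (G.incEdges v).card = 3 ∧ v ≠ v₀},
        G.dot (G.deltaPair w.1 (a w) (b w)) φ = 0) → φ = 0 :=
    fun {φ} hφ hd => flow_zero_tight hconn hfl hnl v₀ a b c hab hac hbc htr hcardeq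
      (by omega) hφ hd
  -- Claim 1: every edge has a degree-3 endpoint
  have hclaim1 : ∀ f : G.E, (G.incEdges (G.tail f)).card = 3 ∨
      (G.incEdges (G.head f)).card = 3 := by
    intro f
    by_contra hcon
    push_neg at hcon
    obtain ⟨hT, hH⟩ := hcon
    obtain ⟨φ, hφflow, hφ0, hφnz⟩ := hfl f
    have hφz : φ = 0 := by
      apply hzero hφflow
      intro w
      apply dot_pair_eq_zero (hab w) (hac w) (hbc w) (htr w) hφflow hnl
      all_goals {
        apply hφnz
        intro hh
        have hmem : f ∈ G.incEdges w.1 := by rw [← hh, htr w]; simp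
        rcases mem_incEdges.mp hmem with h | h
        · rw [h] at hT; exact hT w.2.1
        · rw [h] at hH; exact hH w.2.1
      }
    obtain ⟨e', he'⟩ := Fintype.exists_ne_of_one_lt_card (by omega) f
    exact hφnz e' he' (by rw [hφz]; rfl)
  -- Claim 2: no degree-3 vertex has two heavy edges
  have hclaim2 : ∀ (w : {v : G.V // (G.incEdges v).card = 3 ∧ v ≠ v₀}) (f f' : G.E),
      f ≠ f' → f ∈ G.incEdges w.1 → f' ∈ G.incEdges w.1 →
      ((G.incEdges (G.tail f)).card = 4 ∨ (G.incEdges (G.head f)).card = 4) →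
      ((G.incEdges (G.tail f')).card = 4 ∨ (G.incEdges (G.head f')).card = 4) →
      False := by
    intro w f f' hff' hfw hf'w hheavy hheavy'
    obtain ⟨φ, hφflow, hφ0, hφnz⟩ := hfl f
    obtain ⟨φ', hφ'flow, hφ'0, hφ'nz⟩ := hfl f'
    have hoff : ∀ (ε : G.E), ε ∈ G.incEdges w.1 →
        ((G.incEdges (G.tail ε)).card = 4 ∨ (G.incEdges (G.head ε)).card = 4) →
        ∀ (ψ : G.E → ZMod 3), G.IsFlow ψ → (∀ e, e ≠ ε → ψ e ≠ 0) →
        ∀ u : {v : G.V // (G.incEdges v).card = 3 ∧ v ≠ v₀}, u ≠ w →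
        G.dot (G.deltaPair u.1 (a u) (b u)) ψ = 0 := by
      intro ε hεw hheavyε ψ hψflow hψnz u hu
      apply dot_pair_eq_zero (hab u) (hac u) (hbc u) (htr u) hψflow hnl
      all_goals {
        apply hψnz
        intro hh
        have hmem : ε ∈ G.incEdges u.1 := by rw [← hh, htr u]; simp
        rcases hheavyε with hv4 | hv4 <;> rcases mem_incEdges.mp hmem with h | h
        · rw [h] at hv4
          have := u.2.1
          omega
        · rcases mem_incEdges.mp hεw with h2 | h2
          · rw [h2] at hv4
            have := w.2.1
            omega
          · exact hu (Subtype.ext (h.symm.trans h2))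
        · rcases mem_incEdges.mp hεw with h2 | h2
          · exact hu (Subtype.ext (h.symm.trans h2))
          · rw [h2] at hv4
            have := w.2.1
            omega
        · rw [h] at hv4
          have := u.2.1
          omega
      }
    have hεf : f = a w ∨ f = b w ∨ f = c w := by
      have := hfw
      rw [htr w] at this
      simpa using this
    have hεf' : f' = a w ∨ f' = b w ∨ f' = c w := by
      have := hf'w
      rw [htr w] at this
      simpa using this
    have hα := dot_pair_ne_zero (hab w) (hac w) (hbc w) (htr w) hεf hφflow hnl hφ0 hφnz
    have hα' := dot_pair_ne_zero (hab w) (hac w) (hbc w) (htr w) hεf' hφ'flow hnl hφ'0 hφ'nz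
    set α := G.dot (G.deltaPair w.1 (a w) (b w)) φ with hαdef
    set α' := G.dot (G.deltaPair w.1 (a w) (b w)) φ' with hα'def
    have hχflow := isFlow_combination hφflow hφ'flow α' α
    have hχdots : ∀ u : {v : G.V // (G.incEdges v).card = 3 ∧ v ≠ v₀},
        G.dot (G.deltaPair u.1 (a u) (b u)) (fun e => α' * φ e - α * φ' e) = 0 := by
      intro u
      rw [dot_combination]
      by_cases hu : u = w
      · subst hu
        rw [← hαdef, ← hα'def]
        ring
      · rw [hoff f hfw hheavy φ hφflow hφnz u hu,
          hoff f' hf'w hheavy' φ' hφ'flow hφ'nz u hu]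
        ring
    have hχ0 := hzero hχflow hχdots
    have hev := congrFun hχ0 f'
    simp only [Pi.zero_apply] at hev
    rw [hφ'0, mul_zero, sub_zero] at hev
    exact (mul_ne_zero hα' (hφnz f' (Ne.symm hff'))) hev
  -- Counting
  set V4c := Finset.univ.filter fun v : G.V => ¬ (G.incEdges v).card = 3 with hV4cdef
  have hV4card : n₃ + V4c.card = n := by
    rw [hn₃def, hV3def, hV4cdef, hndef, ← Finset.card_univ]
    exact Finset.card_filter_add_card_filter_not _
  have hcard4 : ∀ u ∈ V4c, (G.incEdges u).card = 4 := by
    intro u hu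
    have h1 := (Finset.mem_filter.mp hu).2
    have h2 := hmin u
    have h3 := hmax u
    omega
  set heavyE := Finset.univ.filter fun f : G.E =>
    (G.incEdges (G.tail f)).card = 4 ∨ (G.incEdges (G.head f)).card = 4 with hheavyEdef
  have hm4a : heavyE.card = ∑ u ∈ V4c, (G.incEdges u).card := by
    rw [Finset.card_eq_sum_card_fiberwise
      (f := fun f => if (G.incEdges (G.tail f)).card = 4 then G.tail f else G.head f)
      (t := V4c) ?H]
    case H =>
      intro f hf
      have hf2 := (Finset.mem_filter.mp hf).2
      beta_reduce
      by_cases hc : (G.incEdges (G.tail f)).card = 4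
      · rw [if_pos hc]
        exact Finset.mem_filter.mpr ⟨Finset.mem_univ _, by omega⟩
      · rw [if_neg hc]
        rcases hf2 with h | h
        · exact absurd h hc
        · exact Finset.mem_filter.mpr ⟨Finset.mem_univ _, by omega⟩
    apply Finset.sum_congr rfl
    intro u hu
    congr 1
    ext f
    simp only [Finset.mem_filter, Finset.mem_univ, true_and, hheavyEdef, mem_incEdges]
    constructor
    · rintro ⟨-, hFf⟩
      by_cases hc : (G.incEdges (G.tail f)).card = 4
      · rw [if_pos hc] at hFf
        exact Or.inl hFf
      · rw [if_neg hc] at hFf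
        exact Or.inr hFf
    · intro hmem
      have hu4 := hcard4 u hu
      by_cases hc : G.tail f = u
      · have hc4 : (G.incEdges (G.tail f)).card = 4 := by rw [hc]; exact hu4
        exact ⟨Or.inl hc4, by rw [if_pos hc4]; exact hc⟩
      · have hh : G.head f = u := by
          rcases hmem with h | h
          · exact absurd h hc
          · exact h
        have hh4 : (G.incEdges (G.head f)).card = 4 := by rw [hh]; exact hu4
        have hc3 : (G.incEdges (G.tail f)).card = 3 := by
          rcases hclaim1 f with h | h
          · exact h
          · rcases hclaim1 f with h' | h'
            · exact h'
            · -- head is degree 3 and degree 4: impossible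
              omega
        refine ⟨Or.inr hh4, ?_⟩
        rw [if_neg (by omega)]
        exact hh
  have hm4b : heavyE.card ≤ n₃ := by
    rw [Finset.card_eq_sum_card_fiberwise
      (f := fun f => if (G.incEdges (G.tail f)).card = 3 then G.tail f else G.head f)
      (t := V3) ?H2]
    case H2 =>
      intro f hf
      have hf2 := (Finset.mem_filter.mp hf).2
      beta_reduce
      by_cases hc : (G.incEdges (G.tail f)).card = 3
      · rw [if_pos hc]
        exact Finset.mem_filter.mpr ⟨Finset.mem_univ _, hc⟩
      · rw [if_neg hc]
        rcases hclaim1 f with h | h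
        · exact absurd h hc
        · exact Finset.mem_filter.mpr ⟨Finset.mem_univ _, h⟩
    calc ∑ w ∈ V3, (heavyE.filter fun f =>
          (if (G.incEdges (G.tail f)).card = 3 then G.tail f else G.head f) = w).card
        ≤ ∑ _w ∈ V3, 1 := by
          apply Finset.sum_le_sum
          intro w hw
          rw [Finset.card_le_one]
          intro f hf f' hf'
          by_contra hne
          have hw3 := (Finset.mem_filter.mp hw).2
          have hwv₀ : w ≠ v₀ := fun he => hv₀ (he ▸ hw3)
          have hmemw : ∀ g' : G.E, g' ∈ heavyE.filter (fun f =>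
              (if (G.incEdges (G.tail f)).card = 3 then G.tail f else G.head f) = w) →
              g' ∈ G.incEdges w ∧
              ((G.incEdges (G.tail g')).card = 4 ∨ (G.incEdges (G.head g')).card = 4) := by
            intro g' hg'
            obtain ⟨hg'1, hg'2⟩ := Finset.mem_filter.mp hg'
            have hheavyg := (Finset.mem_filter.mp hg'1).2
            constructor
            · apply mem_incEdges.mpr
              by_cases hc : (G.incEdges (G.tail g')).card = 3
              · rw [if_pos hc] at hg'2
                exact Or.inl hg'2
              · rw [if_neg hc] at hg'2
                exact Or.inr hg'2
            · exact hheavyg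
          obtain ⟨hfmem, hfheavy⟩ := hmemw f hf
          obtain ⟨hf'mem, hf'heavy⟩ := hmemw f' hf'
          exact hclaim2 ⟨w, hw3, hwv₀⟩ f f' hne hfmem hf'mem hfheavy hf'heavy
      _ = n₃ := by rw [Finset.sum_const, smul_eq_mul, mul_one, hn₃def]
  have hexact : ∑ u ∈ V4c, (G.incEdges u).card = 4 * V4c.card := by
    rw [Finset.sum_congr rfl hcard4, Finset.sum_const, smul_eq_mul]
    ring
  have hhs := handshake hnl
  have hsplitsum : (∑ v ∈ V3, (G.incEdges v).card) + ∑ v ∈ V4c, (G.incEdges v).card =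
      2 * m := by
    rw [← hhs, hV3def, hV4cdef]
    exact Finset.sum_filter_add_sum_filter_not _ _ _
  have h3sum : ∑ v ∈ V3, (G.incEdges v).card = 3 * n₃ := by
    rw [Finset.sum_congr rfl (fun v hv => (Finset.mem_filter.mp hv).2),
      Finset.sum_const, smul_eq_mul, hn₃def]
    ring
  have hv₀mem : v₀ ∈ V4c := Finset.mem_filter.mpr ⟨Finset.mem_univ _, hv₀⟩
  have hn4pos : 1 ≤ V4c.card := Finset.card_pos.mpr ⟨v₀, hv₀mem⟩
  omega

end MultiGraph
namespace MultiGraph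

variable {G : MultiGraph}

/-- The two-vertex cubic case admits a nowhere-zero flow. -/
theorem two_vertex_flow (hnl : ∀ e : G.E, G.tail e ≠ G.head e)
    (v₀ w : G.V) (hwne : w ≠ v₀) (hwall : ∀ u : G.V, u = v₀ ∨ u = w)
    (hm : Fintype.card G.E = 3) : G.HasNZFlow (ZMod 3) := by
  classical
  have hsign : ∀ e : G.E, (G.sign v₀ e = -1 ∧ G.sign w e = 1) ∨
      (G.sign v₀ e = 1 ∧ G.sign w e = -1) := by
    intro e
    have hnle := hnl e
    rcases hwall (G.tail e) with ht | ht <;> rcases hwall (G.head e) with hh | hh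
    · exact absurd (ht.trans hh.symm) hnle
    · left
      constructor
      · exact sign_tail ht (by rw [hh]; exact hwne)
      · exact sign_head (by rw [ht]; exact Ne.symm hwne) hh
    · right
      constructor
      · exact sign_head (by rw [ht]; exact hwne) hh
      · exact sign_tail ht (by rw [hh]; exact Ne.symm hwne)
    · exact absurd (ht.trans hh.symm) hnle
  refine ⟨fun e => ((G.sign v₀ e : ℤ) : ZMod 3), ?_, ?_⟩
  · intro v
    beta_reduce
    rcases hwall v with hv | hv <;> rw [hv]
    · have hterm : ∀ e : G.E, G.sign v₀ e • ((G.sign v₀ e : ℤ) : ZMod 3) = 1 := by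
        intro e
        rcases hsign e with ⟨h1, -⟩ | ⟨h1, -⟩ <;>
          rw [h1, zsmul_eq_mul] <;> decide
      rw [Finset.sum_congr rfl (fun e _ => hterm e), Finset.sum_const, Finset.card_univ,
        hm]
      decide
    · have hterm : ∀ e : G.E, G.sign w e • ((G.sign v₀ e : ℤ) : ZMod 3) = -1 := by
        intro e
        rcases hsign e with ⟨h1, h2⟩ | ⟨h1, h2⟩ <;>
          rw [h1, h2, zsmul_eq_mul] <;> decide
      rw [Finset.sum_congr rfl (fun e _ => hterm e), Finset.sum_const, Finset.card_univ,
        hm]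
      decide
  · intro e
    beta_reduce
    rcases hsign e with ⟨h1, -⟩ | ⟨h1, -⟩ <;> rw [h1] <;> decide

/-- Main density bound for flow-critical-like graphs (with two exceptional
parameter patterns handled on the dual side). -/
theorem main_bound (hconn : G.Connected) (hno : ¬ G.HasNZFlow (ZMod 3))
    (hcrit : ∀ f : G.E, (G.contract ({f} : Set G.E)).HasNZFlow (ZMod 3))
    (hE2 : 2 ≤ Fintype.card G.E) :
    5 * Fintype.card G.V ≤ 3 * Fintype.card G.E ∨
      (Fintype.card G.V = 4 ∧ Fintype.card G.E = 6) ∨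
      (Fintype.card G.V = 5 ∧ Fintype.card G.E = 8) := by
  classical
  have hnl : ∀ e : G.E, G.tail e ≠ G.head e := fun e => (exists_fflow hno e (hcrit e)).1
  have hfl : ∀ f : G.E, ∃ φ : G.E → ZMod 3, G.IsFlow φ ∧ φ f = 0 ∧
      ∀ e, e ≠ f → φ e ≠ 0 := fun f => (exists_fflow hno f (hcrit f)).2
  have hmin := three_le_incEdges hconn hfl hnl hE2
  have hhs := handshake hnl
  set n := Fintype.card G.V with hndef
  set m := Fintype.card G.E with hmdef
  have hn1 : 1 ≤ n := Fintype.card_pos_iff.mpr hconn.1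
  by_cases hcub : ∀ v : G.V, (G.incEdges v).card = 3
  · have h2m : 2 * m = 3 * n := by
      rw [← hhs, Finset.sum_congr rfl (fun v _ => hcub v), Finset.sum_const,
        Finset.card_univ, smul_eq_mul, ← hndef]
      ring
    obtain ⟨v₀⟩ := hconn.1
    have hb := card_add_card_le hconn hfl hnl v₀
    have hJ : Fintype.card {v : G.V // (G.incEdges v).card = 3 ∧ v ≠ v₀} = n - 1 := by
      have heq : (Finset.univ.filter fun v : G.V =>
          (G.incEdges v).card = 3 ∧ v ≠ v₀) = Finset.univ.erase v₀ := by
        ext v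
        simp [hcub v, Finset.mem_erase]
      rw [Fintype.card_subtype, heq, Finset.card_erase_of_mem (Finset.mem_univ v₀),
        Finset.card_univ, ← hndef]
    rw [hJ] at hb
    have hcases : (n = 2 ∧ m = 3) ∨ (n = 4 ∧ m = 6) := by omega
    rcases hcases with ⟨hn, hm⟩ | ⟨hn, hm⟩
    · exfalso
      obtain ⟨w, hwne⟩ := Fintype.exists_ne_of_one_lt_card (by omega) v₀
      have hwall : ∀ u : G.V, u = v₀ ∨ u = w := by
        intro u
        by_contra hcon
        push_neg at hcon
        obtain ⟨hu1, hu2⟩ := hcon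
        have h3 : ({v₀, w, u} : Finset G.V).card = 3 := by
          rw [Finset.card_insert_of_notMem (by simp [Ne.symm hwne, Ne.symm hu1]),
            Finset.card_insert_of_notMem (by simp [Ne.symm hu2]),
            Finset.card_singleton]
        have hle : ({v₀, w, u} : Finset G.V).card ≤ n := by
          rw [hndef, ← Finset.card_univ]
          exact Finset.card_le_card (Finset.subset_univ _)
        omega
      exact hno (two_vertex_flow hnl v₀ w hwne hwall (by omega))
    · exact Or.inr (Or.inl ⟨hn, hm⟩)
  · push_neg at hcub
    obtain ⟨v₀, hv₀⟩ := hcub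
    have hb := card_add_card_le hconn hfl hnl v₀
    set V3 := Finset.univ.filter (fun v : G.V => (G.incEdges v).card = 3) with hV3def
    set n₃ := V3.card with hn₃def
    have hJ : Fintype.card {v : G.V // (G.incEdges v).card = 3 ∧ v ≠ v₀} = n₃ := by
      rw [Fintype.card_subtype]
      congr 1
      ext v
      simp only [Finset.mem_filter, Finset.mem_univ, true_and, hV3def]
      exact ⟨fun h => h.1, fun h => ⟨h, fun he => hv₀ (he ▸ h)⟩⟩
    rw [hJ] at hb
    have hn3n : n₃ ≤ n := by
      rw [hn₃def, hndef, ← Finset.card_univ]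
      exact Finset.card_filter_le _ _
    set V4c := Finset.univ.filter (fun v : G.V => ¬ (G.incEdges v).card = 3) with hV4cdef
    have hV4card : n₃ + V4c.card = n := by
      rw [hn₃def, hV3def, hV4cdef, hndef, ← Finset.card_univ]
      exact Finset.card_filter_add_card_filter_not _
    have hsplitsum : (∑ v ∈ V3, (G.incEdges v).card) +
        ∑ v ∈ V4c, (G.incEdges v).card = 2 * m := by
      rw [← hhs, hV3def, hV4cdef]
      exact Finset.sum_filter_add_sum_filter_not _ _ _
    have h3sum : ∑ v ∈ V3, (G.incEdges v).card = 3 * n₃ := by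
      rw [Finset.sum_congr rfl (fun v hv => (Finset.mem_filter.mp hv).2),
        Finset.sum_const, smul_eq_mul, hn₃def]
      ring
    have hge4 : ∀ v ∈ V4c, 4 ≤ (G.incEdges v).card := by
      intro v hv
      have h1 := (Finset.mem_filter.mp hv).2
      have h2 := hmin v
      omega
    have hv₀mem : v₀ ∈ V4c := Finset.mem_filter.mpr ⟨Finset.mem_univ _, hv₀⟩
    have hn4pos : 1 ≤ V4c.card := Finset.card_pos.mpr ⟨v₀, hv₀mem⟩
    by_cases h5 : ∃ v : G.V, 5 ≤ (G.incEdges v).card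
    · obtain ⟨v₅, hv₅⟩ := h5
      have hv₅mem : v₅ ∈ V4c :=
        Finset.mem_filter.mpr ⟨Finset.mem_univ _, by omega⟩
      have h4sum : 4 * V4c.card + 1 ≤ ∑ v ∈ V4c, (G.incEdges v).card := by
        rw [← Finset.add_sum_erase _ _ hv₅mem]
        have hrest : (V4c.erase v₅).card • 4 ≤ ∑ v ∈ V4c.erase v₅, (G.incEdges v).card :=
          Finset.card_nsmul_le_sum _ _ _
            (fun v hv => hge4 v (Finset.mem_of_mem_erase hv))
        rw [smul_eq_mul] at hrest
        have hcarderase : (V4c.erase v₅).card = V4c.card - 1 :=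
          Finset.card_erase_of_mem hv₅mem
        have : 1 ≤ V4c.card := Finset.card_pos.mpr ⟨v₅, hv₅mem⟩
        omega
      left
      omega
    · push_neg at h5
      have h4sum' : ∑ v ∈ V4c, (G.incEdges v).card = 4 * V4c.card := by
        apply le_antisymm
        · have := Finset.sum_le_card_nsmul V4c (fun v => (G.incEdges v).card) 4
            (fun v _ => by beta_reduce; have := h5 v; omega)
          rwa [smul_eq_mul, mul_comm] at this
        · have := Finset.card_nsmul_le_sum V4c (fun v => (G.incEdges v).card) 4 hge4
          rwa [smul_eq_mul, mul_comm] at this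
      by_cases htight : n + n₃ ≤ m
      · left
        omega
      · right
        have hm1 : m + 1 = n + n₃ := by omega
        have := tight_case hconn hfl hnl hE2 v₀ hv₀ hmin (fun v => by have := h5 v; omega)
          (by rw [← hV3def, ← hn₃def, ← hndef, ← hmdef]; omega)
        exact Or.inr this

end MultiGraph
namespace MultiGraph

variable {D : MultiGraph}

/-- 4-critical graphs have no parallel edges. -/
theorem fourCritical_simple (hfour : FourCritical D) :
    ∀ d d' : D.E, d ≠ d' →
      ¬((D.tail d = D.tail d' ∧ D.head d = D.head d') ∨
        (D.tail d = D.head d' ∧ D.head d = D.tail d')) := by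
  intro d d' hne hpar
  have hproper : ({e | e ≠ d'} : Set D.E) ≠ Set.univ := by
    intro hh
    have : d' ∈ ({e | e ≠ d'} : Set D.E) := by rw [hh]; trivial
    exact this rfl
  obtain ⟨f, hf⟩ := hfour.2 Set.univ {e | e ≠ d'}
    (fun _ _ => ⟨Set.mem_univ _, Set.mem_univ _⟩) (Or.inr hproper)
  apply hfour.1
  refine ⟨fun v => f ⟨v, Set.mem_univ v⟩, fun e => ?_⟩
  by_cases he : e = d'
  · subst he
    have hd := hf ⟨d, hne⟩
    rcases hpar with ⟨h1, h2⟩ | ⟨h1, h2⟩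
    · rw [← h1, ← h2]
      exact hd
    · rw [← h1, ← h2]
      exact hd.symm
  · exact hf ⟨e, he⟩

/-- 4-critical loopless graphs have minimum degree at least 3. -/
theorem fourCritical_mindeg (hfour : FourCritical D)
    (hloop : ∀ e : D.E, D.tail e ≠ D.head e) (v : D.V) :
    3 ≤ (D.incEdges v).card := by
  classical
  by_contra hlt
  push_neg at hlt
  have hproper : ({u | u ≠ v} : Set D.V) ≠ Set.univ := by
    intro hh
    have : v ∈ ({u | u ≠ v} : Set D.V) := by rw [hh]; trivial
    exact this rfl
  obtain ⟨f, hf⟩ := hfour.2 {u | u ≠ v} {e | D.tail e ≠ v ∧ D.head e ≠ v}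
    (fun e he => ⟨he.1, he.2⟩) (Or.inl hproper)
  have hmem1 : ∀ x : D.V, x ≠ v → x ∈ ({u | u ≠ v} : Set D.V) := fun x h => h
  set used : Finset (Fin 3) := (D.incEdges v).attach.image
    (fun e => if h : D.tail e.1 = v then
      f ⟨D.head e.1, hmem1 _ (fun hh => hloop e.1 (h.trans hh.symm))⟩
      else f ⟨D.tail e.1, hmem1 _ h⟩) with husedef
  have hused : used.card ≤ 2 := by
    calc used.card ≤ (D.incEdges v).attach.card := Finset.card_image_le
      _ = (D.incEdges v).card := Finset.card_attach
      _ ≤ 2 := by omega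
  obtain ⟨c0, hc0⟩ : ∃ c : Fin 3, c ∉ used := by
    by_contra hcon
    push_neg at hcon
    have hsub : (Finset.univ : Finset (Fin 3)) ⊆ used := fun c _ => hcon c
    have := Finset.card_le_card hsub
    simp at this
    omega
  apply hfour.1
  refine ⟨fun u => if h : u = v then c0 else f ⟨u, hmem1 _ h⟩, fun e => ?_⟩
  beta_reduce
  by_cases hev : D.tail e = v <;> by_cases hev2 : D.head e = v
  · exact absurd (hev.trans hev2.symm) (hloop e)
  · rw [dif_pos hev, dif_neg hev2]
    intro heq
    apply hc0
    rw [heq]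
    apply Finset.mem_image.mpr
    refine ⟨⟨e, mem_incEdges.mpr (Or.inl hev)⟩, Finset.mem_attach _ _, ?_⟩
    rw [dif_pos hev]
  · rw [dif_neg hev, dif_pos hev2]
    intro heq
    apply hc0
    rw [← heq]
    apply Finset.mem_image.mpr
    refine ⟨⟨e, mem_incEdges.mpr (Or.inr hev2)⟩, Finset.mem_attach _ _, ?_⟩
    rw [dif_neg hev]
  · rw [dif_neg hev, dif_neg hev2]
    exact hf ⟨e, ⟨hev, hev2⟩⟩

/-- A loopless multigraph on at most 3 vertices is 3-colorable. -/
theorem colorable_of_card_le_three (hloop : ∀ e : D.E, D.tail e ≠ D.head e)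
    (hcard : Fintype.card D.V ≤ 3) : D.Colorable3 := by
  classical
  refine ⟨fun v => Fin.castLE hcard ((Fintype.equivFin D.V) v), fun e => ?_⟩
  intro heq
  apply hloop e
  have h1 := (Fin.castLE_injective hcard) heq
  exact (Fintype.equivFin D.V).injective h1

end MultiGraph
namespace MultiGraph

variable {D : MultiGraph}

/-- A loopless 4-critical graph with 4 vertices and 6 edges is `K₄`. -/
theorem K4_case (hfour : FourCritical D) (hloop : ∀ e : D.E, D.tail e ≠ D.head e)
    (hn : Fintype.card D.V = 4) (hm : Fintype.card D.E = 6) : Iso D K4 := by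
  classical
  have hsimple := fourCritical_simple hfour
  have hadj : ∀ x y : D.V, x ≠ y → ∃ d : D.E,
      (D.tail d = x ∧ D.head d = y) ∨ (D.tail d = y ∧ D.head d = x) := by
    intro x y hxy
    by_contra hcon
    push_neg at hcon
    apply hfour.1
    obtain ⟨z1, hz1⟩ : ∃ z, z ∉ ({x, y} : Finset D.V) := by
      by_contra hc2
      push_neg at hc2
      have hsub : (Finset.univ : Finset D.V) ⊆ {x, y} := fun z _ => hc2 z
      have hcard := Finset.card_le_card hsub
      have h2 : ({x, y} : Finset D.V).card ≤ 2 :=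
        (Finset.card_insert_le _ _).trans (by simp)
      rw [Finset.card_univ, hn] at hcard
      omega
    have hz1x : z1 ≠ x := fun h => hz1 (by simp [h])
    have hz1y : z1 ≠ y := fun h => hz1 (by simp [h])
    set rest := Finset.univ \ ({x, y, z1} : Finset D.V) with hrest
    have hrestcard : rest.card = 1 := by
      rw [hrest, Finset.card_sdiff_of_subset (Finset.subset_univ _), Finset.card_univ, hn]
      have h3 : ({x, y, z1} : Finset D.V).card = 3 := by
        rw [Finset.card_insert_of_notMem (by simp [hxy, Ne.symm hz1x]),
          Finset.card_insert_of_notMem (by simp [Ne.symm hz1y]),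
          Finset.card_singleton]
      omega
    refine ⟨fun u => if u = x ∨ u = y then 0 else if u = z1 then 1 else 2, fun e => ?_⟩
    beta_reduce
    intro heq
    by_cases h1 : D.tail e = x ∨ D.tail e = y <;>
      by_cases h2 : D.head e = x ∨ D.head e = y
    · have hne := hloop e
      rcases h1 with h1 | h1 <;> rcases h2 with h2 | h2
      · exact hne (h1.trans h2.symm)
      · exact (hcon e).1 h1 h2
      · exact (hcon e).2 h1 h2
      · exact hne (h1.trans h2.symm)
    · rw [if_pos h1, if_neg h2] at heq
      by_cases h3 : D.head e = z1
      · rw [if_pos h3] at heq; exact absurd heq (by decide)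
      · rw [if_neg h3] at heq; exact absurd heq (by decide)
    · rw [if_neg h1, if_pos h2] at heq
      by_cases h3 : D.tail e = z1
      · rw [if_pos h3] at heq; exact absurd heq (by decide)
      · rw [if_neg h3] at heq; exact absurd heq (by decide)
    · rw [if_neg h1, if_neg h2] at heq
      by_cases h3 : D.tail e = z1 <;> by_cases h4 : D.head e = z1
      · exact hloop e (h3.trans h4.symm)
      · rw [if_pos h3, if_neg h4] at heq; exact absurd heq (by decide)
      · rw [if_neg h3, if_pos h4] at heq; exact absurd heq (by decide)
      · have hmt : D.tail e ∈ rest := by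
          rw [hrest]
          simp only [Finset.mem_sdiff, Finset.mem_univ, true_and, Finset.mem_insert,
            Finset.mem_singleton]
          push_neg
          exact ⟨fun h => h1 (Or.inl h), fun h => h1 (Or.inr h), h3⟩
        have hmh : D.head e ∈ rest := by
          rw [hrest]
          simp only [Finset.mem_sdiff, Finset.mem_univ, true_and, Finset.mem_insert,
            Finset.mem_singleton]
          push_neg
          exact ⟨fun h => h2 (Or.inl h), fun h => h2 (Or.inr h), h4⟩
        exact hloop e (Finset.card_le_one.mp (le_of_eq hrestcard) _ hmt _ hmh)
  have hcardV : Fintype.card D.V = Fintype.card K4.V := by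
    rw [hn]
    simp [K4, wheel]
  set fV : D.V ≃ K4.V := Fintype.equivOfCardEq hcardV with hfVdef
  have hK4nl : ∀ ε : K4.E, K4.tail ε ≠ K4.head ε := by decide
  have hK4pairs : ∀ ε ε' : K4.E, ε ≠ ε' →
      ¬((K4.tail ε = K4.tail ε' ∧ K4.head ε = K4.head ε') ∨
        (K4.tail ε = K4.head ε' ∧ K4.head ε = K4.tail ε')) := by decide
  have hne' : ∀ ε : K4.E, fV.symm (K4.tail ε) ≠ fV.symm (K4.head ε) :=
    fun ε h => hK4nl ε (fV.symm.injective h)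
  set h : K4.E → D.E := fun ε => (hadj _ _ (hne' ε)).choose with hhdef
  have hspec : ∀ ε : K4.E,
      (D.tail (h ε) = fV.symm (K4.tail ε) ∧ D.head (h ε) = fV.symm (K4.head ε)) ∨
      (D.tail (h ε) = fV.symm (K4.head ε) ∧ D.head (h ε) = fV.symm (K4.tail ε)) :=
    fun ε => (hadj _ _ (hne' ε)).choose_spec
  have hinj : Function.Injective h := by
    intro ε ε' heq
    by_contra hne
    apply hK4pairs ε ε' hne
    have s1 := hspec ε
    have s2 := hspec ε'
    rw [heq] at s1
    rcases s1 with ⟨a1, a2⟩ | ⟨a1, a2⟩ <;> rcases s2 with ⟨b1, b2⟩ | ⟨b1, b2⟩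
    · exact Or.inl ⟨fV.symm.injective (a1.symm.trans b1),
        fV.symm.injective (a2.symm.trans b2)⟩
    · exact Or.inr ⟨fV.symm.injective (a1.symm.trans b1),
        fV.symm.injective (a2.symm.trans b2)⟩
    · exact Or.inr ⟨fV.symm.injective (a2.symm.trans b2),
        fV.symm.injective (a1.symm.trans b1)⟩
    · exact Or.inl ⟨fV.symm.injective (a2.symm.trans b2),
        fV.symm.injective (a1.symm.trans b1)⟩
  have hbij : Function.Bijective h :=
    (Fintype.bijective_iff_injective_and_card h).mpr ⟨hinj, by rw [hm]; simp [K4, wheel]⟩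
  set g : D.E ≃ K4.E := (Equiv.ofBijective h hbij).symm with hgdef
  refine ⟨fV, g, fun d => ?_⟩
  have hh : h (g d) = d := (Equiv.ofBijective h hbij).apply_symm_apply d
  have s := hspec (g d)
  rw [hh] at s
  rcases s with ⟨a1, a2⟩ | ⟨a1, a2⟩
  · left
    constructor
    · rw [a1, Equiv.apply_symm_apply]
    · rw [a2, Equiv.apply_symm_apply]
  · right
    constructor
    · rw [a2, Equiv.apply_symm_apply]
    · rw [a1, Equiv.apply_symm_apply]
end MultiGraph
namespace MultiGraph

variable {D : MultiGraph}

/-- A loopless 4-critical graph cannot have 5 vertices and 8 edges. -/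
theorem five_case (hfour : FourCritical D) (hloop : ∀ e : D.E, D.tail e ≠ D.head e)
    (hn : Fintype.card D.V = 5) (hm : Fintype.card D.E = 8) : False := by
  classical
  have hsimple := fourCritical_simple hfour
  have hmind : ∀ v : D.V, 3 ≤ (D.incEdges v).card :=
    fun v => fourCritical_mindeg hfour hloop v
  have hhs := handshake hloop
  obtain ⟨u, hu4, hall3⟩ : ∃ u : D.V, (D.incEdges u).card = 4 ∧
      ∀ w, w ≠ u → (D.incEdges w).card = 3 := by
    obtain ⟨u, hu⟩ : ∃ u : D.V, 4 ≤ (D.incEdges u).card := by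
      by_contra hc
      push_neg at hc
      have hle := Finset.sum_le_card_nsmul Finset.univ (fun v => (D.incEdges v).card) 3
        (fun v _ => by beta_reduce; have := hc v; omega)
      rw [smul_eq_mul, Finset.card_univ, hn, hhs, hm] at hle
      omega
    have hu4 : (D.incEdges u).card = 4 := by
      by_contra hc
      have hrest := Finset.card_nsmul_le_sum (Finset.univ.erase u)
        (fun v => (D.incEdges v).card) 3 (fun v _ => hmind v)
      rw [smul_eq_mul, Finset.card_erase_of_mem (Finset.mem_univ u), Finset.card_univ,
        hn] at hrest
      have hsplit := Finset.add_sum_erase Finset.univ (fun v => (D.incEdges v).card)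
        (Finset.mem_univ u)
      beta_reduce at hsplit
      rw [hhs, hm] at hsplit
      omega
    refine ⟨u, hu4, fun w hw => ?_⟩
    by_contra hc
    have h4w : 4 ≤ (D.incEdges w).card := by have := hmind w; omega
    have hwmem : w ∈ Finset.univ.erase u := Finset.mem_erase.mpr ⟨hw, Finset.mem_univ _⟩
    have hsplit := Finset.add_sum_erase Finset.univ (fun v => (D.incEdges v).card)
      (Finset.mem_univ u)
    have hsplit2 := Finset.add_sum_erase _ (fun v => (D.incEdges v).card) hwmem
    have hrest := Finset.card_nsmul_le_sum ((Finset.univ.erase u).erase w)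
      (fun v => (D.incEdges v).card) 3 (fun v _ => hmind v)
    beta_reduce at hsplit hsplit2 hrest
    rw [smul_eq_mul, Finset.card_erase_of_mem hwmem,
      Finset.card_erase_of_mem (Finset.mem_univ u), Finset.card_univ, hn] at hrest
    rw [hhs, hm] at hsplit
    omega
  have huniq : ∀ (x y : D.V) (d d' : D.E),
      ((D.tail d = x ∧ D.head d = y) ∨ (D.tail d = y ∧ D.head d = x)) →
      ((D.tail d' = x ∧ D.head d' = y) ∨ (D.tail d' = y ∧ D.head d' = x)) → d = d' := by
    intro x y d d' hd hd'
    by_contra hne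
    apply hsimple d d' hne
    rcases hd with ⟨h1, h2⟩ | ⟨h1, h2⟩ <;> rcases hd' with ⟨h3, h4⟩ | ⟨h3, h4⟩
    · exact Or.inl ⟨h1.trans h3.symm, h2.trans h4.symm⟩
    · exact Or.inr ⟨h1.trans h4.symm, h2.trans h3.symm⟩
    · exact Or.inr ⟨h1.trans h4.symm, h2.trans h3.symm⟩
    · exact Or.inl ⟨h1.trans h3.symm, h2.trans h4.symm⟩
  -- other-endpoint map
  set ow : D.V → D.E → D.V := fun w e => if D.tail e = w then D.head e else D.tail e
    with howdef
  have howBtw : ∀ w : D.V, ∀ e ∈ D.incEdges w,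
      ((D.tail e = w ∧ D.head e = ow w e) ∨ (D.tail e = ow w e ∧ D.head e = w)) ∧
        ow w e ≠ w := by
    intro w e he
    rcases mem_incEdges.mp he with h | h
    · have hoe : ow w e = D.head e := if_pos h
      exact ⟨Or.inl ⟨h, hoe.symm⟩, by rw [hoe]; exact fun hh => hloop e (h.trans hh.symm)⟩
    · by_cases h2 : D.tail e = w
      · exact absurd (h2.trans h.symm) (hloop e)
      · have hoe : ow w e = D.tail e := if_neg h2
        exact ⟨Or.inr ⟨hoe.symm, h⟩, by rw [hoe]; exact h2⟩
  have hoinj : ∀ e ∈ D.incEdges u, ∀ e' ∈ D.incEdges u, ow u e = ow u e' → e = e' := by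
    intro e he e' he' heq
    obtain ⟨hB, -⟩ := howBtw u e he
    obtain ⟨hB', -⟩ := howBtw u e' he'
    rw [← heq] at hB'
    exact huniq u (ow u e) e e' hB hB'
  have himg : (D.incEdges u).image (ow u) = Finset.univ.erase u := by
    apply Finset.eq_of_subset_of_card_le
    · intro x hx
      obtain ⟨e, he, rfl⟩ := Finset.mem_image.mp hx
      exact Finset.mem_erase.mpr ⟨(howBtw u e he).2, Finset.mem_univ _⟩
    · rw [Finset.card_erase_of_mem (Finset.mem_univ u), Finset.card_univ, hn,
        Finset.card_image_of_injOn (fun e he e' he' => hoinj e he e' he'), hu4]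
  have hspoke : ∀ w, w ≠ u → ∃ e, ((D.tail e = u ∧ D.head e = w) ∨
      (D.tail e = w ∧ D.head e = u)) := by
    intro w hw
    have hmem : w ∈ (D.incEdges u).image (ow u) := by
      rw [himg]
      exact Finset.mem_erase.mpr ⟨hw, Finset.mem_univ _⟩
    obtain ⟨e, he, heq⟩ := Finset.mem_image.mp hmem
    obtain ⟨hB, -⟩ := howBtw u e he
    rw [heq] at hB
    exact ⟨e, hB⟩
  set innerE := Finset.univ.filter (fun e : D.E => ¬(D.tail e = u ∨ D.head e = u))
    with hinnerdef
  have hinnercard : innerE.card = 4 := by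
    have hpart := Finset.card_filter_add_card_filter_not (s := Finset.univ)
      (p := fun e : D.E => D.tail e = u ∨ D.head e = u)
    have heq1 : Finset.univ.filter (fun e : D.E => D.tail e = u ∨ D.head e = u) =
        D.incEdges u := rfl
    rw [heq1, hu4, Finset.card_univ, hm] at hpart
    rw [hinnerdef]
    omega
  set innerAt : D.V → Finset D.E :=
    fun w => (D.incEdges w).filter (fun e => ¬(D.tail e = u ∨ D.head e = u))
    with hinnerAtdef
  have hinnerAtcard : ∀ w, w ≠ u → (innerAt w).card = 2 := by
    intro w hw
    have hsplit := Finset.card_filter_add_card_filter_not (s := D.incEdges w)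
      (p := fun e => D.tail e = u ∨ D.head e = u)
    have h1 : ((D.incEdges w).filter (fun e => D.tail e = u ∨ D.head e = u)).card = 1 := by
      rw [Finset.card_eq_one]
      obtain ⟨e0, hB0⟩ := hspoke w hw
      refine ⟨e0, ?_⟩
      ext e
      simp only [Finset.mem_filter, Finset.mem_singleton]
      constructor
      · rintro ⟨hew, hu'⟩
        have hBe : (D.tail e = u ∧ D.head e = w) ∨ (D.tail e = w ∧ D.head e = u) := by
          rcases hu' with h | h <;> rcases mem_incEdges.mp hew with h2 | h2
          · exact absurd (h.symm.trans h2) (Ne.symm hw)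
          · exact Or.inl ⟨h, h2⟩
          · exact Or.inr ⟨h2, h⟩
          · exact absurd (h.symm.trans h2) (Ne.symm hw)
        exact huniq u w e e0 hBe hB0
      · rintro rfl
        constructor
        · apply mem_incEdges.mpr
          rcases hB0 with ⟨h1, h2⟩ | ⟨h1, h2⟩
          · exact Or.inr h2
          · exact Or.inl h1
        · rcases hB0 with ⟨h1, h2⟩ | ⟨h1, h2⟩
          · exact Or.inl h1
          · exact Or.inr h2
    rw [h1, hall3 w hw] at hsplit
    rw [hinnerAtdef]
    beta_reduce
    omega
  have hinnerfacts : ∀ w, ∀ e ∈ innerAt w,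
      e ∈ D.incEdges w ∧ D.tail e ≠ u ∧ D.head e ≠ u := by
    intro w e he
    obtain ⟨h1, h2⟩ := Finset.mem_filter.mp he
    push_neg at h2
    exact ⟨h1, h2⟩
  -- pick w1
  obtain ⟨w1, hw1⟩ := Fintype.exists_ne_of_one_lt_card (by omega) u
  obtain ⟨e1, e2, he12, hinnerw1⟩ := Finset.card_eq_two.mp (hinnerAtcard w1 hw1)
  have he1mem : e1 ∈ innerAt w1 := by rw [hinnerw1]; simp
  have he2mem : e2 ∈ innerAt w1 := by rw [hinnerw1]; simp
  obtain ⟨hB1, ha2⟩ := howBtw w1 e1 (hinnerfacts w1 e1 he1mem).1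
  obtain ⟨hB2, hb2⟩ := howBtw w1 e2 (hinnerfacts w1 e2 he2mem).1
  set av := ow w1 e1 with havdef
  set bv := ow w1 e2 with hbvdef
  have hau : av ≠ u := by
    rcases hB1 with ⟨h4, h5⟩ | ⟨h4, h5⟩
    · exact fun hh => (hinnerfacts w1 e1 he1mem).2.2 (h5.trans hh)
    · exact fun hh => (hinnerfacts w1 e1 he1mem).2.1 (h4.trans hh)
  have hbu : bv ≠ u := by
    rcases hB2 with ⟨h4, h5⟩ | ⟨h4, h5⟩
    · exact fun hh => (hinnerfacts w1 e2 he2mem).2.2 (h5.trans hh)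
    · exact fun hh => (hinnerfacts w1 e2 he2mem).2.1 (h4.trans hh)
  have hab : av ≠ bv := by
    intro heq
    apply he12
    have hB2' := hB2
    rw [← heq] at hB2'
    exact huniq w1 av e1 e2 hB1 hB2'
  obtain ⟨cv, hcv⟩ : ∃ c : D.V, c ∉ ({u, w1, av, bv} : Finset D.V) := by
    by_contra hc
    push_neg at hc
    have hsub : (Finset.univ : Finset D.V) ⊆ {u, w1, av, bv} := fun z _ => hc z
    have hlecard := Finset.card_le_card hsub
    have h4a := Finset.card_insert_le u ({w1, av, bv} : Finset D.V)
    have h4b := Finset.card_insert_le w1 ({av, bv} : Finset D.V)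
    have h4c := Finset.card_insert_le av ({bv} : Finset D.V)
    rw [Finset.card_univ, hn] at hlecard
    simp only [Finset.card_singleton] at h4c
    omega
  have hcu : cv ≠ u := fun h => hcv (by simp [h])
  have hcw1 : cv ≠ w1 := fun h => hcv (by simp [h])
  have hca : cv ≠ av := fun h => hcv (by simp [h])
  have hcb : cv ≠ bv := fun h => hcv (by simp [h])
  have hfive : ∀ x : D.V, x = u ∨ x = w1 ∨ x = av ∨ x = bv ∨ x = cv := by
    intro x
    by_contra hcx
    push_neg at hcx
    obtain ⟨n1, n2, n3, n4, n5⟩ := hcx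
    have hsub : ({x, u, w1, av, bv, cv} : Finset D.V) ⊆ Finset.univ :=
      Finset.subset_univ _
    have hc6 : ({x, u, w1, av, bv, cv} : Finset D.V).card = 6 := by
      rw [Finset.card_insert_of_notMem (by simp [n1, n2, n3, n4, n5]),
        Finset.card_insert_of_notMem
          (by simp [Ne.symm hw1, Ne.symm hau, Ne.symm hbu, Ne.symm hcu]),
        Finset.card_insert_of_notMem (by simp [Ne.symm ha2, Ne.symm hb2, Ne.symm hcw1]),
        Finset.card_insert_of_notMem (by simp [hab, Ne.symm hca]),
        Finset.card_insert_of_notMem (by simp [Ne.symm hcb]),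
        Finset.card_singleton]
    have := Finset.card_le_card hsub
    rw [hc6, Finset.card_univ, hn] at this
    omega
  obtain ⟨e3, e4, he34, hinnerc⟩ := Finset.card_eq_two.mp (hinnerAtcard cv hcu)
  have he3mem : e3 ∈ innerAt cv := by rw [hinnerc]; simp
  have he4mem : e4 ∈ innerAt cv := by rw [hinnerc]; simp
  have hnotw1 : ∀ e ∈ innerAt cv, ow cv e ≠ w1 := by
    intro e he heq
    obtain ⟨hmem, h2, h3⟩ := hinnerfacts cv e he
    obtain ⟨hB, -⟩ := howBtw cv e hmem
    have hin : e ∈ innerAt w1 := by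
      apply Finset.mem_filter.mpr
      refine ⟨?_, by push_neg; exact ⟨h2, h3⟩⟩
      apply mem_incEdges.mpr
      rcases hB with ⟨h4, h5⟩ | ⟨h4, h5⟩
      · exact Or.inr (h5.trans heq)
      · exact Or.inl (h4.trans heq)
    rw [hinnerw1] at hin
    rw [heq] at hB
    rcases Finset.mem_insert.mp hin with rfl | hin2
    · rcases hB with ⟨h4, h5⟩ | ⟨h4, h5⟩ <;> rcases hB1 with ⟨h6, h7⟩ | ⟨h6, h7⟩
      · exact hcw1 (h4.symm.trans h6)
      · exact hca (h4.symm.trans h6)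
      · exact hca (h5.symm.trans h7)
      · exact ha2 (h6.symm.trans h4)
    · rw [Finset.mem_singleton] at hin2
      subst hin2
      rcases hB with ⟨h4, h5⟩ | ⟨h4, h5⟩ <;> rcases hB2 with ⟨h6, h7⟩ | ⟨h6, h7⟩
      · exact hcw1 (h4.symm.trans h6)
      · exact hcb (h4.symm.trans h6)
      · exact hcb (h5.symm.trans h7)
      · exact hb2 (h6.symm.trans h4)
  have howc : ∀ e ∈ innerAt cv, ow cv e = av ∨ ow cv e = bv := by
    intro e he
    obtain ⟨hmem, h2, h3⟩ := hinnerfacts cv e he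
    obtain ⟨hB, hnc⟩ := howBtw cv e hmem
    rcases hfive (ow cv e) with h | h | h | h | h
    · exfalso
      rcases hB with ⟨h4, h5⟩ | ⟨h4, h5⟩
      · exact h3 (h5.trans h)
      · exact h2 (h4.trans h)
    · exact absurd h (hnotw1 e he)
    · exact Or.inl h
    · exact Or.inr h
    · exact absurd h hnc
  have h34 : ow cv e3 ≠ ow cv e4 := by
    intro heq
    apply he34
    obtain ⟨hB3, -⟩ := howBtw cv e3 (hinnerfacts cv e3 he3mem).1
    obtain ⟨hB4, -⟩ := howBtw cv e4 (hinnerfacts cv e4 he4mem).1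
    rw [← heq] at hB4
    exact huniq cv (ow cv e3) e3 e4 hB3 hB4
  obtain ⟨ea, eb, heab, heamem, hebmem, hova, hovb⟩ : ∃ ea eb : D.E, ea ≠ eb ∧
      ea ∈ innerAt cv ∧ eb ∈ innerAt cv ∧ ow cv ea = av ∧ ow cv eb = bv := by
    rcases howc e3 he3mem with h3 | h3 <;> rcases howc e4 he4mem with h4 | h4
    · exact absurd (h3.trans h4.symm) h34
    · exact ⟨e3, e4, he34, he3mem, he4mem, h3, h4⟩
    · exact ⟨e4, e3, Ne.symm he34, he4mem, he3mem, h4, h3⟩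
    · exact absurd (h3.trans h4.symm) h34
  obtain ⟨hBa, -⟩ := howBtw cv ea (hinnerfacts cv ea heamem).1
  rw [hova] at hBa
  obtain ⟨hBb, -⟩ := howBtw cv eb (hinnerfacts cv eb hebmem).1
  rw [hovb] at hBb
  -- distinctness of the four inner edges
  have hd1a : e1 ≠ ea := by
    intro heq
    rw [heq] at hB1
    rcases hB1 with ⟨h4, h5⟩ | ⟨h4, h5⟩ <;> rcases hBa with ⟨h6, h7⟩ | ⟨h6, h7⟩ <;>
    first
      | exact hcw1 (h6.symm.trans h4)
      | exact hcw1 (h7.symm.trans h5)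
      | exact hca (h7.symm.trans h5)
      | exact hca (h6.symm.trans h4)
      | exact hcb (h7.symm.trans h5)
      | exact hcb (h6.symm.trans h4)
      | exact hab (h5.symm.trans h7)
      | exact hab (h4.symm.trans h6)
      | exact hab (h7.symm.trans h5)
      | exact hab (h6.symm.trans h4)
      | exact hb2 (h4.symm.trans h6)
  have hd1b : e1 ≠ eb := by
    intro heq
    rw [heq] at hB1
    rcases hB1 with ⟨h4, h5⟩ | ⟨h4, h5⟩ <;> rcases hBb with ⟨h6, h7⟩ | ⟨h6, h7⟩ <;>
    first
      | exact hcw1 (h6.symm.trans h4)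
      | exact hcw1 (h7.symm.trans h5)
      | exact hca (h7.symm.trans h5)
      | exact hca (h6.symm.trans h4)
      | exact hcb (h7.symm.trans h5)
      | exact hcb (h6.symm.trans h4)
      | exact hab (h5.symm.trans h7)
      | exact hab (h4.symm.trans h6)
      | exact hab (h7.symm.trans h5)
      | exact hab (h6.symm.trans h4)
      | exact hb2 (h4.symm.trans h6)
  have hd2a : e2 ≠ ea := by
    intro heq
    rw [heq] at hB2
    rcases hB2 with ⟨h4, h5⟩ | ⟨h4, h5⟩ <;> rcases hBa with ⟨h6, h7⟩ | ⟨h6, h7⟩ <;>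
    first
      | exact hcw1 (h6.symm.trans h4)
      | exact hcw1 (h7.symm.trans h5)
      | exact hca (h7.symm.trans h5)
      | exact hca (h6.symm.trans h4)
      | exact hcb (h7.symm.trans h5)
      | exact hcb (h6.symm.trans h4)
      | exact hab (h5.symm.trans h7)
      | exact hab (h4.symm.trans h6)
      | exact hab (h7.symm.trans h5)
      | exact hab (h6.symm.trans h4)
      | exact hb2 (h4.symm.trans h6)
  have hd2b : e2 ≠ eb := by
    intro heq
    rw [heq] at hB2
    rcases hB2 with ⟨h4, h5⟩ | ⟨h4, h5⟩ <;> rcases hBb with ⟨h6, h7⟩ | ⟨h6, h7⟩ <;>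
    first
      | exact hcw1 (h6.symm.trans h4)
      | exact hcw1 (h7.symm.trans h5)
      | exact hca (h7.symm.trans h5)
      | exact hca (h6.symm.trans h4)
      | exact hcb (h7.symm.trans h5)
      | exact hcb (h6.symm.trans h4)
      | exact hab (h5.symm.trans h7)
      | exact hab (h4.symm.trans h6)
      | exact hab (h7.symm.trans h5)
      | exact hab (h6.symm.trans h4)
      | exact hb2 (h4.symm.trans h6)
  have hmemE : ∀ w, ∀ e ∈ innerAt w, e ∈ innerE := fun w e he =>
    Finset.mem_filter.mpr ⟨Finset.mem_univ _, (Finset.mem_filter.mp he).2⟩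
  have hinnerEeq : ({e1, e2, ea, eb} : Finset D.E) = innerE := by
    apply Finset.eq_of_subset_of_card_le
    · intro e he
      simp only [Finset.mem_insert, Finset.mem_singleton] at he
      rcases he with rfl | rfl | rfl | rfl
      · exact hmemE w1 e he1mem
      · exact hmemE w1 e he2mem
      · exact hmemE cv e heamem
      · exact hmemE cv e hebmem
    · rw [hinnercard]
      rw [Finset.card_insert_of_notMem (by simp [he12, hd1a, hd1b]),
        Finset.card_insert_of_notMem (by simp [hd2a, hd2b]),
        Finset.card_insert_of_notMem (by simp [heab]),
        Finset.card_singleton]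
  -- the coloring
  apply hfour.1
  refine ⟨fun x => if x = u then 0 else if x = w1 ∨ x = cv then 1 else 2, fun e => ?_⟩
  beta_reduce
  intro heq
  have havnot : ¬(av = w1 ∨ av = cv) := fun h => h.elim ha2 (fun hh => hca hh.symm)
  have hbvnot : ¬(bv = w1 ∨ bv = cv) := fun h => h.elim hb2 (fun hh => hcb hh.symm)
  by_cases ht : D.tail e = u <;> by_cases hh : D.head e = u
  · exact hloop e (ht.trans hh.symm)
  · rw [if_pos ht, if_neg hh] at heq
    by_cases hc : D.head e = w1 ∨ D.head e = cv
    · rw [if_pos hc] at heq; exact absurd heq (by decide)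
    · rw [if_neg hc] at heq; exact absurd heq (by decide)
  · rw [if_neg ht, if_pos hh] at heq
    by_cases hc : D.tail e = w1 ∨ D.tail e = cv
    · rw [if_pos hc] at heq; exact absurd heq (by decide)
    · rw [if_neg hc] at heq; exact absurd heq (by decide)
  · rw [if_neg ht, if_neg hh] at heq
    have hein : e ∈ innerE :=
      Finset.mem_filter.mpr ⟨Finset.mem_univ _, fun hor => hor.elim ht hh⟩
    rw [← hinnerEeq] at hein
    simp only [Finset.mem_insert, Finset.mem_singleton] at hein
    rcases hein with rfl | rfl | rfl | rfl
    · rcases hB1 with ⟨h4, h5⟩ | ⟨h4, h5⟩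
      · rw [h4, h5, if_pos (Or.inl rfl), if_neg havnot] at heq
        exact absurd heq (by decide)
      · rw [h4, h5, if_neg havnot, if_pos (Or.inl rfl)] at heq
        exact absurd heq (by decide)
    · rcases hB2 with ⟨h4, h5⟩ | ⟨h4, h5⟩
      · rw [h4, h5, if_pos (Or.inl rfl), if_neg hbvnot] at heq
        exact absurd heq (by decide)
      · rw [h4, h5, if_neg hbvnot, if_pos (Or.inl rfl)] at heq
        exact absurd heq (by decide)
    · rcases hBa with ⟨h4, h5⟩ | ⟨h4, h5⟩
      · rw [h4, h5, if_pos (Or.inr rfl), if_neg havnot] at heq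
        exact absurd heq (by decide)
      · rw [h4, h5, if_neg havnot, if_pos (Or.inr rfl)] at heq
        exact absurd heq (by decide)
    · rcases hBb with ⟨h4, h5⟩ | ⟨h4, h5⟩
      · rw [h4, h5, if_pos (Or.inr rfl), if_neg hbvnot] at heq
        exact absurd heq (by decide)
      · rw [h4, h5, if_neg hbvnot, if_pos (Or.inr rfl)] at heq
        exact absurd heq (by decide)

end MultiGraph
open MultiGraph in
/-- For a connected plane multigraph `G` with dual `G*`: `G` is
`ℤ/3`-flow-critical iff `G*` is 4-critical.  Consequently (via Euler's formula
and the bound `|E| ≥ (5/3)|V|`), every `n`-vertex 4-critical loopless planar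
graph other than `K₄` has at most `2.5 (n - 2)` edges. -/
theorem flowCritical_iff_dual_fourCritical :
    (∀ P : PlaneDualPair, P.G.FlowCritical (ZMod 3) ↔ FourCritical P.D) ∧
    (∀ P : PlaneDualPair, FourCritical P.D →
      (∀ e : P.D.E, P.D.tail e ≠ P.D.head e) → ¬ Iso P.D K4 →
      2 * Fintype.card P.D.E + 10 ≤ 5 * Fintype.card P.D.V) := by
  constructor
  · exact part1
  · intro P hfour hloopD hK4
    classical
    obtain ⟨hconn, hno, hcon⟩ := (part1 P).2 hfour
    have hcards : Fintype.card P.G.E = Fintype.card P.D.E := Fintype.card_congr P.eEquiv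
    have hE2D : 2 ≤ Fintype.card P.D.E := by
      by_contra h
      push_neg at h
      apply hfour.1
      have hsub := Fintype.card_le_one_iff.mp (by omega : Fintype.card P.D.E ≤ 1)
      by_cases hcase : Nonempty P.D.E
      · obtain ⟨d⟩ := hcase
        refine ⟨fun v => if v = P.D.tail d then 0 else 1, fun e => ?_⟩
        beta_reduce
        rw [hsub e d, if_pos rfl, if_neg (fun hh => hloopD d hh.symm)]
        decide
      · exact ⟨fun _ => 0, fun e => absurd ⟨e⟩ hcase⟩
    have hE2 : 2 ≤ Fintype.card P.G.E := by rw [hcards]; exact hE2D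
    have hmb := main_bound hconn hno hcon hE2
    have heuler := P.euler
    rcases hmb with h5n | ⟨hn4, hm6⟩ | ⟨hn5, hm8⟩
    · omega
    · exact absurd (K4_case hfour hloopD (by omega) (by omega)) hK4
    · exact (five_case hfour hloopD (by omega) (by omega)).elim
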